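/- arXiv:2603.22045 — 3 statements merged into one kernel-verified Lean document; each statement's English description precedes it below -/
import Mathlib

section
/- Let w ∈ 𝒟 (i.e., w = 0^l(Ds) or 1^l(Ds) with s Sturmian) and let θ be the slope of w. Then 100·Dc_θ ≼_alt w ≼_alt 011·Dc_θ, where c_θ is the characteristic Sturmian word of slope θ. -/
/-- A sequence (indexed from 1) over the alphabet {0,1}. -/
def IsBinary (s : ℕ → ℤ) : Prop := ∀ i, s i = 0 ∨ s i = 1

/-- `s` is a Sturmian word of slope `θ` (floor or ceiling form). -/
def IsSturmian (θ : ℝ) (s : ℕ → ℤ) : Prop :=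
  Irrational θ ∧ θ ∈ Set.Ioo (0:ℝ) 1 ∧
    ∃ ρ : ℝ,
      (∀ n : ℕ, 1 ≤ n → s n = ⌊((n:ℝ)+1)*θ+ρ⌋ - ⌊(n:ℝ)*θ+ρ⌋) ∨
      (∀ n : ℕ, 1 ≤ n → s n = ⌈((n:ℝ)+1)*θ+ρ⌉ - ⌈(n:ℝ)*θ+ρ⌉)

/-- The characteristic Sturmian word of slope `θ`. -/
noncomputable def charWord (θ : ℝ) : ℕ → ℤ := fun n => ⌊((n:ℝ)+1)*θ⌋ - ⌊(n:ℝ)*θ⌋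

/-- `tval r s = ∑_{i ≥ 1} s i * r ^ i`. -/
noncomputable def tval (r : ℝ) (s : ℕ → ℤ) : ℝ := ∑' i : ℕ, (s (i+1) : ℝ) * r^(i+1)

/-- Equality of infinite words (positions ≥ 1). -/
def EqW (s s' : ℕ → ℤ) : Prop := ∀ i, 1 ≤ i → s i = s' i

/-- Strict lexicographic order on infinite words (positions ≥ 1). -/
def LexLt (s s' : ℕ → ℤ) : Prop :=
  ∃ n, 1 ≤ n ∧ (∀ i, 1 ≤ i → i < n → s i = s' i) ∧ s n < s' n

def LexLe (s s' : ℕ → ℤ) : Prop := LexLt s s' ∨ EqW s s'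

/-- Strict alternate order on infinite words. -/
def AltLt (s s' : ℕ → ℤ) : Prop :=
  ∃ n, 1 ≤ n ∧ (∀ i, 1 ≤ i → i < n → s i = s' i) ∧ (-1:ℤ)^n * (s' n - s n) = 1

def AltLe (s s' : ℕ → ℤ) : Prop := AltLt s s' ∨ EqW s s'

/-- The doubling map `D(w₁w₂…) = w₁w₁w₂w₂…`. -/
def Dbl (w : ℕ → ℤ) : ℕ → ℤ := fun n => w ((n+1)/2)

/-- The shift map `T(w₁w₂w₃…) = w₂w₃…`. -/
def Shf (w : ℕ → ℤ) : ℕ → ℤ := fun n => w (n+1)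

/-- The word `a^l s` : the letter `a` repeated `l` times followed by `s`. -/
def Prepend (a : ℤ) (l : ℕ) (s : ℕ → ℤ) : ℕ → ℤ := fun n => if n ≤ l then a else s (n - l)

/-- The finite word `u` followed by the infinite word `s`. -/
def Cat (u : List ℤ) (s : ℕ → ℤ) : ℕ → ℤ :=
  fun n => if n ≤ u.length then u.getD (n-1) 0 else s (n - u.length)

/-- The finite word `u` occurs as a contiguous block of `s` (at a position ≥ 1). -/
def Subword (u : List ℤ) (s : ℕ → ℤ) : Prop :=
  ∃ n, 1 ≤ n ∧ ∀ i, i < u.length → s (n + i) = u.getD i 0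

/-- `s` is aperiodic: not eventually periodic. -/
def Aperiodic (s : ℕ → ℤ) : Prop :=
  ¬ ∃ k, 1 ≤ k ∧ ∃ N, 1 ≤ N ∧ ∀ n, N ≤ n → s n = s (n + k)

/-- `w` has slope `θ`: the averages of its letters tend to `θ`. -/
def HasSlope (w : ℕ → ℤ) (θ : ℝ) : Prop :=
  Filter.Tendsto (fun n : ℕ => (∑ i ∈ Finset.Icc 1 n, (w i : ℝ)) / n)
    Filter.atTop (nhds θ)

/-- The class `S` of words of the form `0^l s` or `1^l s` with `s` Sturmian. -/
def MemS (w : ℕ → ℤ) : Prop :=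
  ∃ a l s θ, (a = (0:ℤ) ∨ a = 1) ∧ IsSturmian θ s ∧ EqW w (Prepend a l s)

/-- The class `𝒟` of words of the form `0^l (D s)` or `1^l (D s)` with `s` Sturmian. -/
def MemD (w : ℕ → ℤ) : Prop :=
  ∃ a l s θ, (a = (0:ℤ) ∨ a = 1) ∧ IsSturmian θ s ∧ EqW w (Prepend a l (Dbl s))

/-- The class `𝒫 = D(Σ^ℕ) ∪ T(D(Σ^ℕ))` with `Σ = {0,1}`. -/
def MemP (w : ℕ → ℤ) : Prop :=
  (∃ u, IsBinary u ∧ EqW w (Dbl u)) ∨ (∃ u, IsBinary u ∧ EqW w (Shf (Dbl u)))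

section Aux

theorem floor_add_floor_le' (a b : ℝ) : ⌊a⌋ + ⌊b⌋ ≤ ⌊a+b⌋ :=
  Int.le_floor.mpr (by push_cast; gcongr <;> exact Int.floor_le _)

theorem floor_add_le' (a b : ℝ) : ⌊a+b⌋ ≤ ⌊a⌋ + ⌊b⌋ + 1 := by
  have h1 := Int.lt_floor_add_one a
  have h2 := Int.lt_floor_add_one b
  exact Int.lt_add_one_iff.mp (Int.floor_lt.mpr (by push_cast; linarith))

theorem le_ceil_add' (a b : ℝ) : ⌊a⌋ + ⌈b⌉ ≤ ⌈a+b⌉ := by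
  have h1 := Int.floor_le a
  have h2 := Int.ceil_lt_add_one b
  exact Int.le_ceil_iff.mpr (by push_cast; linarith)

theorem ceil_add_le' (a b : ℝ) : ⌈a+b⌉ ≤ ⌊a⌋ + ⌈b⌉ + 1 := by
  have h1 := Int.lt_floor_add_one a
  have h2 := Int.le_ceil b
  exact Int.ceil_le.mpr (by push_cast; linarith)

theorem sum_floorword (θ ρ : ℝ) (s : ℕ → ℤ)
    (h : ∀ n : ℕ, 1 ≤ n → s n = ⌊((n:ℝ)+1)*θ+ρ⌋ - ⌊(n:ℝ)*θ+ρ⌋) (n : ℕ) :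
    ∑ i ∈ Finset.Icc 1 n, s i = ⌊((n:ℝ)+1)*θ+ρ⌋ - ⌊θ+ρ⌋ := by
  induction n with
  | zero => norm_num
  | succ m ih =>
    rw [Finset.sum_Icc_succ_top (by omega), ih, h (m+1) (by omega)]
    push_cast; ring_nf

theorem sum_ceilword (θ ρ : ℝ) (s : ℕ → ℤ)
    (h : ∀ n : ℕ, 1 ≤ n → s n = ⌈((n:ℝ)+1)*θ+ρ⌉ - ⌈(n:ℝ)*θ+ρ⌉) (n : ℕ) :
    ∑ i ∈ Finset.Icc 1 n, s i = ⌈((n:ℝ)+1)*θ+ρ⌉ - ⌈θ+ρ⌉ := by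
  induction n with
  | zero => norm_num
  | succ m ih =>
    rw [Finset.sum_Icc_succ_top (by omega), ih, h (m+1) (by omega)]
    push_cast; ring_nf

theorem sum_charWord (θ : ℝ) (h0 : 0 < θ) (h1 : θ < 1) (n : ℕ) :
    ∑ i ∈ Finset.Icc 1 n, charWord θ i = ⌊((n:ℝ)+1)*θ⌋ := by
  have h := sum_floorword θ 0 (charWord θ) (fun n _ => by simp [charWord]) n
  simp only [add_zero] at h
  have hz : ⌊θ⌋ = 0 := Int.floor_eq_zero_iff.mpr ⟨le_of_lt h0, h1⟩
  omega

/-- The key comparison lemma: comparing partial sums of the shifted Sturmian word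
with partial sums of the characteristic word. -/
theorem key_compare (θ ρ : ℝ) (h0 : 0 < θ) (h1 : θ < 1) (s : ℕ → ℤ)
    (hfc : (∀ n:ℕ, 1 ≤ n → s n = ⌊((n:ℝ)+1)*θ+ρ⌋ - ⌊(n:ℝ)*θ+ρ⌋) ∨
           (∀ n:ℕ, 1 ≤ n → s n = ⌈((n:ℝ)+1)*θ+ρ⌉ - ⌈(n:ℝ)*θ+ρ⌉)) (n : ℕ) :
    (s 1 = 0 → ∑ i ∈ Finset.Icc 1 n, charWord θ i ≤ ∑ i ∈ Finset.Icc 1 n, s (i+1)) ∧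
    (s 1 = 1 → ∑ i ∈ Finset.Icc 1 n, s (i+1) ≤ ∑ i ∈ Finset.Icc 1 n, charWord θ i) := by
  rw [sum_charWord θ h0 h1 n]
  rcases hfc with h | h
  · have hsum : ∑ i ∈ Finset.Icc 1 n, s (i+1) = ⌊((n:ℝ)+1)*θ+(θ+ρ)⌋ - ⌊θ+(θ+ρ)⌋ := by
      apply sum_floorword θ (θ+ρ) (fun i => s (i+1))
      intro m hm
      rw [h (m+1) (by omega)]
      push_cast
      ring_nf
    have hs1 : s 1 = ⌊2*θ+ρ⌋ - ⌊θ+ρ⌋ := by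
      rw [h 1 (by omega)]; norm_num
    have harg : θ+(θ+ρ) = 2*θ+ρ := by ring
    rw [hsum, harg]
    constructor <;> intro he
    · have := floor_add_floor_le' (((n:ℝ)+1)*θ) (θ+ρ)
      omega
    · have := floor_add_le' (((n:ℝ)+1)*θ) (θ+ρ)
      omega
  · have hsum : ∑ i ∈ Finset.Icc 1 n, s (i+1) = ⌈((n:ℝ)+1)*θ+(θ+ρ)⌉ - ⌈θ+(θ+ρ)⌉ := by
      apply sum_ceilword θ (θ+ρ) (fun i => s (i+1))
      intro m hm
      rw [h (m+1) (by omega)]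
      push_cast
      ring_nf
    have hs1 : s 1 = ⌈2*θ+ρ⌉ - ⌈θ+ρ⌉ := by
      rw [h 1 (by omega)]; norm_num
    have harg : θ+(θ+ρ) = 2*θ+ρ := by ring
    rw [hsum, harg]
    constructor <;> intro he
    · have := le_ceil_add' (((n:ℝ)+1)*θ) (θ+ρ)
      omega
    · have := ceil_add_le' (((n:ℝ)+1)*θ) (θ+ρ)
      omega

theorem hasSlope_of_bounded (W : ℕ → ℤ) (θ : ℝ) (K : ℝ)
    (h : ∀ m : ℕ, |((∑ i ∈ Finset.Icc 1 m, W i : ℤ) : ℝ) - m*θ| ≤ K) : HasSlope W θ := by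
  rw [HasSlope, ← tendsto_sub_nhds_zero_iff]
  refine squeeze_zero_norm' ?_ (tendsto_const_div_atTop_nhds_zero_nat K)
  filter_upwards [Filter.eventually_ge_atTop 1] with n hn
  have hn' : (0:ℝ) < n := by exact_mod_cast hn
  have heq : (∑ i ∈ Finset.Icc 1 n, (W i : ℝ)) / n - θ
      = (((∑ i ∈ Finset.Icc 1 n, W i : ℤ) : ℝ) - n*θ) / n := by
    push_cast
    field_simp
  rw [Real.norm_eq_abs, heq, abs_div, abs_of_pos hn']
  exact div_le_div_of_nonneg_right (h n) hn'.le

theorem floorword_sum_bound (θ ρ : ℝ) (s : ℕ → ℤ)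
    (h : ∀ n : ℕ, 1 ≤ n → s n = ⌊((n:ℝ)+1)*θ+ρ⌋ - ⌊(n:ℝ)*θ+ρ⌋) (n : ℕ) :
    |((∑ i ∈ Finset.Icc 1 n, s i : ℤ) : ℝ) - n*θ| ≤ |θ+ρ| + |((⌊θ+ρ⌋:ℤ):ℝ)| + 1 := by
  rw [sum_floorword θ ρ s h n]
  have h1 := Int.floor_le (((n:ℝ)+1)*θ+ρ)
  have h2 := Int.lt_floor_add_one (((n:ℝ)+1)*θ+ρ)
  have ha := abs_le.mp (le_refl |θ+ρ|)
  have hb := abs_le.mp (le_refl |((⌊θ+ρ⌋:ℤ):ℝ)|)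
  rw [abs_le]
  push_cast
  push_cast at ha hb
  constructor <;> nlinarith [h1, h2]

theorem ceilword_sum_bound (θ ρ : ℝ) (s : ℕ → ℤ)
    (h : ∀ n : ℕ, 1 ≤ n → s n = ⌈((n:ℝ)+1)*θ+ρ⌉ - ⌈(n:ℝ)*θ+ρ⌉) (n : ℕ) :
    |((∑ i ∈ Finset.Icc 1 n, s i : ℤ) : ℝ) - n*θ| ≤ |θ+ρ| + |((⌈θ+ρ⌉:ℤ):ℝ)| + 1 := by
  rw [sum_ceilword θ ρ s h n]
  have h1 := Int.le_ceil (((n:ℝ)+1)*θ+ρ)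
  have h2 := Int.ceil_lt_add_one (((n:ℝ)+1)*θ+ρ)
  have ha := abs_le.mp (le_refl |θ+ρ|)
  have hb := abs_le.mp (le_refl |((⌈θ+ρ⌉:ℤ):ℝ)|)
  rw [abs_le]
  push_cast
  push_cast at ha hb
  constructor <;> nlinarith [h1, h2]

theorem sum_dbl (s : ℕ → ℤ) (t : ℕ) :
    ∑ i ∈ Finset.Icc 1 t, Dbl s i
      = (∑ i ∈ Finset.Icc 1 (t/2), s i) + ∑ i ∈ Finset.Icc 1 ((t+1)/2), s i := by
  induction t with
  | zero => norm_num
  | succ m ih =>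
    rw [Finset.sum_Icc_succ_top (by omega), ih]
    have hd : Dbl s (m+1) = s ((m+2)/2) := by rw [Dbl]
    rcases Nat.even_or_odd m with ⟨k, hk⟩ | ⟨k, hk⟩
    · subst hk
      have e1 : (k+k)/2 = k := by omega
      have e2 : (k+k+1)/2 = k := by omega
      have e3 : (k+k+2)/2 = k+1 := by omega
      rw [hd]
      rw [e1, e2, e3, Finset.sum_Icc_succ_top (by omega : 1 ≤ k+1)]
      ring
    · subst hk
      rw [hd, show (2*k+1)/2 = k by omega, show (2*k+1+1)/2 = k+1 by omega,
        show (2*k+1+1+1)/2 = k+1 by omega,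
        Finset.sum_Icc_succ_top (by omega : 1 ≤ k+1)]
      ring

theorem sum_prepend (a : ℤ) (l : ℕ) (f : ℕ → ℤ) (m : ℕ) :
    ∑ i ∈ Finset.Icc 1 m, Prepend a l f i
      = a * (min l m) + ∑ j ∈ Finset.Icc 1 (m - l), f j := by
  induction m with
  | zero => norm_num
  | succ m ih =>
    rw [Finset.sum_Icc_succ_top (by omega), ih]
    by_cases hc : m+1 ≤ l
    · rw [Prepend, if_pos hc]
      rw [show min l (m+1) = min l m + 1 by omega, show m+1-l = m-l by omega]
      push_cast
      ring
    · rw [Prepend]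
      simp only [if_neg hc]
      rw [show min l (m+1) = min l m by omega, show m+1-l = (m-l)+1 by omega,
        Finset.sum_Icc_succ_top (by omega : 1 ≤ m-l+1), show m-l+1 = m+1-l by omega]
      ring

end Aux

theorem floor_pair' (θ x : ℝ) (h0 : 0 < θ) (h1 : θ < 1) :
    ⌊x+θ⌋ - ⌊x⌋ = 0 ∨ ⌊x+θ⌋ - ⌊x⌋ = 1 := by
  have a : ⌊x⌋ ≤ ⌊x+θ⌋ := Int.floor_le_floor (by linarith)
  have b : ⌊x+θ⌋ ≤ ⌊x⌋ + 1 := by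
    rw [← Int.floor_add_one]
    exact Int.floor_le_floor (by linarith)
  omega

theorem ceil_pair' (θ x : ℝ) (h0 : 0 < θ) (h1 : θ < 1) :
    ⌈x+θ⌉ - ⌈x⌉ = 0 ∨ ⌈x+θ⌉ - ⌈x⌉ = 1 := by
  have a : ⌈x⌉ ≤ ⌈x+θ⌉ := Int.ceil_le_ceil (by linarith)
  have b : ⌈x+θ⌉ ≤ ⌈x⌉ + 1 := by
    rw [← Int.ceil_add_one]
    exact Int.ceil_le_ceil (by linarith)
  omega

theorem cat3_eval_1 (A B C : ℤ) (f : ℕ → ℤ) : Cat [A,B,C] f 1 = A := by simp [Cat]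
theorem cat3_eval_2 (A B C : ℤ) (f : ℕ → ℤ) : Cat [A,B,C] f 2 = B := by simp [Cat]
theorem cat3_eval_3 (A B C : ℤ) (f : ℕ → ℤ) : Cat [A,B,C] f 3 = C := by simp [Cat]
theorem cat3_eval_ge (A B C : ℤ) (f : ℕ → ℤ) (n : ℕ) (h : 4 ≤ n) :
    Cat [A,B,C] f n = f (n-3) := by
  simp only [Cat, List.length_cons, List.length_nil]
  rw [if_neg (by omega)]

theorem struct_lemma (w : ℕ → ℤ) (a : ℤ) (l : ℕ) (s : ℕ → ℤ)
    (hEq : EqW w (Prepend a l (Dbl s))) (hne : w 1 ≠ w 2) :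
    s 1 = w 2 ∧ ∀ k, 1 ≤ k → w (2*k) = s k ∧ w (2*k+1) = s k := by
  have e1 := hEq 1 le_rfl
  have e2 := hEq 2 (by omega)
  rw [Prepend] at e1 e2
  rcases lt_trichotomy l 1 with h | h | h
  · exfalso
    have hl : l = 0 := by omega
    subst hl
    rw [if_neg (by omega)] at e1 e2
    simp only [Dbl] at e1 e2
    norm_num at e1 e2
    exact hne (e1.trans e2.symm)
  · subst h
    rw [if_pos le_rfl] at e1
    rw [if_neg (by omega)] at e2
    simp only [Dbl] at e2
    norm_num at e2
    refine ⟨e2.symm, fun k hk => ?_⟩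
    constructor
    · have h3 := hEq (2*k) (by omega)
      rw [Prepend, if_neg (by omega)] at h3
      simp only [Dbl] at h3
      rw [h3]
      congr 1
      omega
    · have h3 := hEq (2*k+1) (by omega)
      rw [Prepend, if_neg (by omega)] at h3
      simp only [Dbl] at h3
      rw [h3]
      congr 1
      omega
  · exfalso
    rw [if_pos (by omega)] at e1
    rw [if_pos (by omega)] at e2
    exact hne (e1.trans e2.symm)

theorem sum_split (f g : ℕ → ℤ) (n : ℕ) (hn : 1 ≤ n)
    (hag : ∀ j, 1 ≤ j → j < n → f j = g j)
    (hle : ∑ i ∈ Finset.Icc 1 n, f i ≤ ∑ i ∈ Finset.Icc 1 n, g i) : f n ≤ g n := by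
  obtain ⟨m, rfl⟩ : ∃ m, n = m+1 := ⟨n-1, by omega⟩
  rw [Finset.sum_Icc_succ_top (by omega : 1 ≤ m+1) f,
    Finset.sum_Icc_succ_top (by omega : 1 ≤ m+1) g] at hle
  have heq : ∑ i ∈ Finset.Icc 1 m, f i = ∑ i ∈ Finset.Icc 1 m, g i := by
    apply Finset.sum_congr rfl
    intro j hj
    have := Finset.mem_Icc.mp hj
    exact hag j this.1 (by omega)
  omega

theorem slope_eq (θ θ' : ℝ) (a : ℤ) (ha : a = 0 ∨ a = 1) (l : ℕ) (s : ℕ → ℤ) (w : ℕ → ℤ)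
    (hst : IsSturmian θ' s) (hEq : EqW w (Prepend a l (Dbl s))) (hs : HasSlope w θ) :
    θ = θ' := by
  obtain ⟨hirr, hmem, ρ, hfc⟩ := hst
  obtain ⟨h0, h1⟩ := hmem
  obtain ⟨K, hK0, hb⟩ : ∃ K : ℝ, 0 ≤ K ∧
      ∀ n : ℕ, |((∑ i ∈ Finset.Icc 1 n, s i : ℤ):ℝ) - n*θ'| ≤ K := by
    rcases hfc with h | h
    · exact ⟨_, by positivity, fun n => floorword_sum_bound θ' ρ s h n⟩
    · exact ⟨_, by positivity, fun n => ceilword_sum_bound θ' ρ s h n⟩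
  have hws : HasSlope w θ' := by
    apply hasSlope_of_bounded w θ' ((l:ℝ) + l*θ' + 2*K)
    intro m
    have hsum : ∑ i ∈ Finset.Icc 1 m, w i = ∑ i ∈ Finset.Icc 1 m, Prepend a l (Dbl s) i :=
      Finset.sum_congr rfl (fun i hi => hEq i (Finset.mem_Icc.mp hi).1)
    rw [hsum, sum_prepend, sum_dbl]
    have hb1 := abs_le.mp (hb ((m-l)/2))
    have hb2 := abs_le.mp (hb ((m-l+1)/2))
    rw [abs_le]
    by_cases hml : m ≤ l
    · have ht0 : m - l = 0 := by omega
      rw [ht0, show min l m = m by omega]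
      norm_num
      have hcm : (m:ℝ) ≤ (l:ℝ) := by exact_mod_cast hml
      have hm0 : (0:ℝ) ≤ (m:ℝ) := by positivity
      rcases ha with rfl | rfl <;> push_cast <;> constructor <;> nlinarith
    · rw [show min l m = l by omega]
      have hcast : ((m-l:ℕ):ℝ) = (m:ℝ) - l := by
        push_cast [Nat.cast_sub (by omega : l ≤ m)]
        ring
      have htt : (((m-l)/2:ℕ):ℝ) + (((m-l+1)/2:ℕ):ℝ) = (m:ℝ) - (l:ℝ) := by
        rw [← hcast]
        have : (m-l)/2 + (m-l+1)/2 = m - l := by omega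
        exact_mod_cast this
      have hmul : ((((m-l)/2:ℕ):ℝ) + (((m-l+1)/2:ℕ):ℝ)) * θ' = ((m:ℝ) - l) * θ' := by
        rw [htt]
      have hl0 : (0:ℝ) ≤ (l:ℝ) := by positivity
      rcases ha with rfl | rfl <;> push_cast <;> push_cast at hmul hb1 hb2 <;>
        constructor <;> nlinarith [hb1.1, hb1.2, hb2.1, hb2.2]
  exact tendsto_nhds_unique hs hws

theorem stmt16 (θ : ℝ) (w : ℕ → ℤ) (hw : MemD w) (hs : HasSlope w θ) :
    AltLe (Cat [1,0,0] (Dbl (charWord θ))) w ∧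
    AltLe w (Cat [0,1,1] (Dbl (charWord θ))) := by
  classical
  obtain ⟨a, l, s, θ', ha, hst, hEq⟩ := hw
  have hθ : θ = θ' := slope_eq θ θ' a ha l s w hst hEq hs
  subst hθ
  obtain ⟨hirr, hmem, ρ, hfc⟩ := hst
  obtain ⟨h0, h1⟩ := hmem
  have hsbin : ∀ n, 1 ≤ n → s n = 0 ∨ s n = 1 := by
    intro n hn
    rcases hfc with h | h
    · rw [h n hn, show ((n:ℝ)+1)*θ+ρ = ((n:ℝ)*θ+ρ)+θ by ring]
      exact floor_pair' θ _ h0 h1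
    · rw [h n hn, show ((n:ℝ)+1)*θ+ρ = ((n:ℝ)*θ+ρ)+θ by ring]
      exact ceil_pair' θ _ h0 h1
  have hcbin : ∀ n, 1 ≤ n → charWord θ n = 0 ∨ charWord θ n = 1 := by
    intro n hn
    simp only [charWord]
    rw [show ((n:ℝ)+1)*θ = ((n:ℝ)*θ)+θ by ring]
    exact floor_pair' θ _ h0 h1
  have hwbin : ∀ n, 1 ≤ n → w n = 0 ∨ w n = 1 := by
    intro n hn
    rw [hEq n hn, Prepend]
    split_ifs with hc
    · exact ha
    · simp only [Dbl]
      exact hsbin _ (by omega)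
  constructor
  · -- left inequality
    rcases hwbin 1 le_rfl with hw1 | hw1
    · exact Or.inl ⟨1, le_rfl, fun i hi1 hi2 => by omega,
        by rw [hw1, cat3_eval_1]; norm_num⟩
    · rcases hwbin 2 (by omega) with hw2 | hw2
      · -- w starts 1,0
        obtain ⟨hs1w, hpair⟩ := struct_lemma w a l s hEq (by rw [hw1, hw2]; norm_num)
        have hs1 : s 1 = 0 := by omega
        have hw3 : w 3 = 0 := by
          have h3 := (hpair 1 le_rfl).2
          norm_num at h3
          omega
        by_cases hallEq : ∀ k, 1 ≤ k → charWord θ k = s (k+1)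
        · right
          intro i hi
          rcases show i = 1 ∨ i = 2 ∨ i = 3 ∨ 4 ≤ i by omega with rfl|rfl|rfl|h4
          · rw [cat3_eval_1, hw1]
          · rw [cat3_eval_2, hw2]
          · rw [cat3_eval_3, hw3]
          · obtain ⟨k, hk1, hk⟩ : ∃ k, 1 ≤ k ∧ (i = 2*k+2 ∨ i = 2*k+3) :=
              ⟨(i-2)/2, by omega, by omega⟩
            rw [cat3_eval_ge _ _ _ _ _ h4]
            rcases hk with rfl | rfl
            · have hd : Dbl (charWord θ) (2*k+2-3) = charWord θ k := by
                simp only [Dbl]; congr 1; omega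
              have hwv := (hpair (k+1) (by omega)).1
              rw [show 2*(k+1) = 2*k+2 by ring] at hwv
              rw [hd, hallEq k hk1, hwv]
            · have hd : Dbl (charWord θ) (2*k+3-3) = charWord θ k := by
                simp only [Dbl]; congr 1; omega
              have hwv := (hpair (k+1) (by omega)).2
              rw [show 2*(k+1)+1 = 2*k+3 by ring] at hwv
              rw [hd, hallEq k hk1, hwv]
        · left
          push_neg at hallEq
          have hP : ∃ k, 1 ≤ k ∧ charWord θ k ≠ s (k+1) := hallEq
          obtain ⟨hn1, hnne⟩ := Nat.find_spec hP
          set n := Nat.find hP with hndef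
          have hmin : ∀ j, 1 ≤ j → j < n → charWord θ j = s (j+1) := by
            intro j hj1 hjn
            by_contra hne
            exact (Nat.find_min hP hjn) ⟨hj1, hne⟩
          have hle := (key_compare θ ρ h0 h1 s hfc n).1 hs1
          have hpt : charWord θ n ≤ s (n+1) :=
            sum_split (charWord θ) (fun i => s (i+1)) n hn1 hmin hle
          have hc0 : charWord θ n = 0 ∧ s (n+1) = 1 := by
            rcases hcbin n hn1 with h|h <;> rcases hsbin (n+1) (by omega) with h'|h' <;>
              omega
          refine ⟨2*n+2, by omega, ?_, ?_⟩
          · intro i hi1 hi2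
            rcases show i = 1 ∨ i = 2 ∨ i = 3 ∨ 4 ≤ i by omega with rfl|rfl|rfl|h4
            · rw [cat3_eval_1, hw1]
            · rw [cat3_eval_2, hw2]
            · rw [cat3_eval_3, hw3]
            · obtain ⟨k, hk1, hk⟩ : ∃ k, 1 ≤ k ∧ (i = 2*k+2 ∨ i = 2*k+3) :=
                ⟨(i-2)/2, by omega, by omega⟩
              rw [cat3_eval_ge _ _ _ _ _ h4]
              have hkn : k < n := by omega
              rcases hk with rfl|rfl
              · have hd : Dbl (charWord θ) (2*k+2-3) = charWord θ k := by
                  simp only [Dbl]; congr 1; omega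
                have hwv := (hpair (k+1) (by omega)).1
                rw [show 2*(k+1) = 2*k+2 by ring] at hwv
                rw [hd, hmin k hk1 hkn, hwv]
              · have hd : Dbl (charWord θ) (2*k+3-3) = charWord θ k := by
                  simp only [Dbl]; congr 1; omega
                have hwv := (hpair (k+1) (by omega)).2
                rw [show 2*(k+1)+1 = 2*k+3 by ring] at hwv
                rw [hd, hmin k hk1 hkn, hwv]
          · rw [cat3_eval_ge _ _ _ _ _ (by omega)]
            have hd : Dbl (charWord θ) (2*n+2-3) = charWord θ n := by
              simp only [Dbl]; congr 1; omega
            have hwv := (hpair (n+1) (by omega)).1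
            rw [show 2*(n+1) = 2*n+2 by ring] at hwv
            have hev : (-1:ℤ)^(2*n+2) = 1 := Even.neg_one_pow ⟨n+1, by ring⟩
            rw [hd, hwv, hc0.1, hc0.2, hev]
            norm_num
      · -- w starts 1,1
        refine Or.inl ⟨2, by omega, ?_, by rw [hw2, cat3_eval_2]; norm_num⟩
        intro i hi1 hi2
        have : i = 1 := by omega
        subst this
        rw [cat3_eval_1, hw1]
  · -- right inequality
    rcases hwbin 1 le_rfl with hw1 | hw1
    · rcases hwbin 2 (by omega) with hw2 | hw2
      · -- w starts 0,0
        refine Or.inl ⟨2, by omega, ?_, by rw [hw2, cat3_eval_2]; norm_num⟩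
        intro i hi1 hi2
        have : i = 1 := by omega
        subst this
        rw [cat3_eval_1, hw1]
      · -- w starts 0,1
        obtain ⟨hs1w, hpair⟩ := struct_lemma w a l s hEq (by rw [hw1, hw2]; norm_num)
        have hs1 : s 1 = 1 := by omega
        have hw3 : w 3 = 1 := by
          have h3 := (hpair 1 le_rfl).2
          norm_num at h3
          omega
        by_cases hallEq : ∀ k, 1 ≤ k → charWord θ k = s (k+1)
        · right
          intro i hi
          rcases show i = 1 ∨ i = 2 ∨ i = 3 ∨ 4 ≤ i by omega with rfl|rfl|rfl|h4
          · rw [cat3_eval_1, hw1]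
          · rw [cat3_eval_2, hw2]
          · rw [cat3_eval_3, hw3]
          · obtain ⟨k, hk1, hk⟩ : ∃ k, 1 ≤ k ∧ (i = 2*k+2 ∨ i = 2*k+3) :=
              ⟨(i-2)/2, by omega, by omega⟩
            rw [cat3_eval_ge _ _ _ _ _ h4]
            rcases hk with rfl | rfl
            · have hd : Dbl (charWord θ) (2*k+2-3) = charWord θ k := by
                simp only [Dbl]; congr 1; omega
              have hwv := (hpair (k+1) (by omega)).1
              rw [show 2*(k+1) = 2*k+2 by ring] at hwv
              rw [hd, hallEq k hk1, hwv]
            · have hd : Dbl (charWord θ) (2*k+3-3) = charWord θ k := by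
                simp only [Dbl]; congr 1; omega
              have hwv := (hpair (k+1) (by omega)).2
              rw [show 2*(k+1)+1 = 2*k+3 by ring] at hwv
              rw [hd, hallEq k hk1, hwv]
        · left
          push_neg at hallEq
          have hP : ∃ k, 1 ≤ k ∧ charWord θ k ≠ s (k+1) := hallEq
          obtain ⟨hn1, hnne⟩ := Nat.find_spec hP
          set n := Nat.find hP with hndef
          have hmin : ∀ j, 1 ≤ j → j < n → charWord θ j = s (j+1) := by
            intro j hj1 hjn
            by_contra hne
            exact (Nat.find_min hP hjn) ⟨hj1, hne⟩
          have hle := (key_compare θ ρ h0 h1 s hfc n).2 hs1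
          have hpt : s (n+1) ≤ charWord θ n :=
            sum_split (fun i => s (i+1)) (charWord θ) n hn1
              (fun j hj1 hjn => (hmin j hj1 hjn).symm) hle
          have hc0 : charWord θ n = 1 ∧ s (n+1) = 0 := by
            rcases hcbin n hn1 with h|h <;> rcases hsbin (n+1) (by omega) with h'|h' <;>
              omega
          refine ⟨2*n+2, by omega, ?_, ?_⟩
          · intro i hi1 hi2
            rcases show i = 1 ∨ i = 2 ∨ i = 3 ∨ 4 ≤ i by omega with rfl|rfl|rfl|h4
            · rw [cat3_eval_1, hw1]
            · rw [cat3_eval_2, hw2]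
            · rw [cat3_eval_3, hw3]
            · obtain ⟨k, hk1, hk⟩ : ∃ k, 1 ≤ k ∧ (i = 2*k+2 ∨ i = 2*k+3) :=
                ⟨(i-2)/2, by omega, by omega⟩
              rw [cat3_eval_ge _ _ _ _ _ h4]
              have hkn : k < n := by omega
              rcases hk with rfl|rfl
              · have hd : Dbl (charWord θ) (2*k+2-3) = charWord θ k := by
                  simp only [Dbl]; congr 1; omega
                have hwv := (hpair (k+1) (by omega)).1
                rw [show 2*(k+1) = 2*k+2 by ring] at hwv
                rw [hd, hmin k hk1 hkn, hwv]
              · have hd : Dbl (charWord θ) (2*k+3-3) = charWord θ k := by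
                  simp only [Dbl]; congr 1; omega
                have hwv := (hpair (k+1) (by omega)).2
                rw [show 2*(k+1)+1 = 2*k+3 by ring] at hwv
                rw [hd, hmin k hk1 hkn, hwv]
          · rw [cat3_eval_ge _ _ _ _ _ (by omega)]
            have hd : Dbl (charWord θ) (2*n+2-3) = charWord θ n := by
              simp only [Dbl]; congr 1; omega
            have hwv := (hpair (n+1) (by omega)).1
            rw [show 2*(n+1) = 2*n+2 by ring] at hwv
            have hev : (-1:ℤ)^(2*n+2) = 1 := Even.neg_one_pow ⟨n+1, by ring⟩
            rw [hd, hwv, hc0.1, hc0.2, hev]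
            norm_num
    · exact Or.inl ⟨1, le_rfl, fun i hi1 hi2 => by omega,
        by rw [hw1, cat3_eval_1]; norm_num⟩
end

section
/- Let 0 < r < 1 and let w, w' ∈ 𝒟 be of the same slope with w ≺_alt w' strictly. Then t_{−r}(w) < t_{−r}(w'). -/
set_option linter.unusedTactic false
set_option linter.unnecessarySeqFocus false

namespace Stmt17aux

/-- window sum of length L starting after position m -/
def Wd (v : ℕ → ℤ) (m L : ℕ) : ℤ := ∑ j ∈ Finset.range L, v (m + 1 + j)

lemma Wd_add (v : ℕ → ℤ) (m c d : ℕ) :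
    Wd v m (c + d) = Wd v m c + Wd v (m + c) d := by
  unfold Wd
  rw [Finset.sum_range_add]
  congr 1
  apply Finset.sum_congr rfl
  intro j _
  congr 1
  omega

lemma Wd_succ (v : ℕ → ℤ) (m L : ℕ) :
    Wd v m (L+1) = Wd v m L + v (m+1+L) := Finset.sum_range_succ _ _

lemma floor_diff_bounds (x t : ℝ) :
    t - 1 < ((⌊x + t⌋ - ⌊x⌋ : ℤ):ℝ) ∧ ((⌊x + t⌋ - ⌊x⌋ : ℤ):ℝ) < t + 1 := by
  have h1 := Int.floor_le (x+t)
  have h2 := Int.lt_floor_add_one (x+t)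
  have h3 := Int.floor_le x
  have h4 := Int.lt_floor_add_one x
  constructor <;> push_cast <;> linarith

lemma ceil_diff_bounds (x t : ℝ) :
    t - 1 < ((⌈x + t⌉ - ⌈x⌉ : ℤ):ℝ) ∧ ((⌈x + t⌉ - ⌈x⌉ : ℤ):ℝ) < t + 1 := by
  have h1 := Int.le_ceil (x+t)
  have h2 := Int.ceil_lt_add_one (x+t)
  have h3 := Int.le_ceil x
  have h4 := Int.ceil_lt_add_one x
  constructor <;> push_cast <;> linarith

lemma sturmian_window {θ : ℝ} {s : ℕ → ℤ} (hs : IsSturmian θ s) (m L : ℕ) :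
    (L:ℝ) * θ - 1 < (Wd s m L : ℝ) ∧ (Wd s m L : ℝ) < (L:ℝ) * θ + 1 := by
  obtain ⟨-, -, ρ, hfc⟩ := hs
  rcases hfc with hf | hf
  · set g : ℕ → ℤ := fun j => ⌊((m+1+j:ℕ):ℝ)*θ+ρ⌋ with hg
    have key : Wd s m L = g L - g 0 := by
      rw [← Finset.sum_range_sub g L]
      apply Finset.sum_congr rfl
      intro j _
      rw [hf (m+1+j) (by omega), hg]
      simp only
      congr 2 <;> push_cast <;> ring
    have e1 : g L = ⌊(((m:ℝ)+1)*θ+ρ) + (L:ℝ)*θ⌋ := by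
      rw [hg]; congr 1; push_cast; ring
    have e0 : g 0 = ⌊((m:ℝ)+1)*θ+ρ⌋ := by
      rw [hg]; congr 1; push_cast; ring
    have := floor_diff_bounds (((m:ℝ)+1)*θ+ρ) ((L:ℝ)*θ)
    rw [key, e1, e0]
    exact this
  · set g : ℕ → ℤ := fun j => ⌈((m+1+j:ℕ):ℝ)*θ+ρ⌉ with hg
    have key : Wd s m L = g L - g 0 := by
      rw [← Finset.sum_range_sub g L]
      apply Finset.sum_congr rfl
      intro j _
      rw [hf (m+1+j) (by omega), hg]
      simp only
      congr 2 <;> push_cast <;> ring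
    have e1 : g L = ⌈(((m:ℝ)+1)*θ+ρ) + (L:ℝ)*θ⌉ := by
      rw [hg]; congr 1; push_cast; ring
    have e0 : g 0 = ⌈((m:ℝ)+1)*θ+ρ⌉ := by
      rw [hg]; congr 1; push_cast; ring
    have := ceil_diff_bounds (((m:ℝ)+1)*θ+ρ) ((L:ℝ)*θ)
    rw [key, e1, e0]
    exact this

lemma prepend_le {a : ℤ} {p : ℕ} {s : ℕ → ℤ} {k : ℕ} (hk : k ≤ p) :
    Prepend a p s k = a := if_pos hk

lemma prepend_gt {a : ℤ} {p : ℕ} {s : ℕ → ℤ} {k : ℕ} (hk : p < k) :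
    Prepend a p s k = s (k - p) := if_neg (by omega)

lemma sturmian_binary {θ : ℝ} {s : ℕ → ℤ} (hs : IsSturmian θ s) :
    ∀ n, 1 ≤ n → s n = 0 ∨ s n = 1 := by
  intro n hn
  have h0 : 0 < θ := hs.2.1.1
  have h1 : θ < 1 := hs.2.1.2
  have hb := sturmian_window hs (n-1) 1
  have he : Wd s (n-1) 1 = s n := by
    unfold Wd
    rw [Finset.sum_range_one]
    congr 1; omega
  rw [he] at hb
  push_cast at hb
  have c1 : (-1:ℝ) < (s n : ℝ) := by nlinarith [hb.1]
  have c2 : (s n : ℝ) < 2 := by nlinarith [hb.2]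
  have : (-1:ℤ) < s n := by exact_mod_cast c1
  have : s n < 2 := by exact_mod_cast c2
  omega

end Stmt17aux

namespace Stmt17aux

lemma Wd_const {a : ℤ} {p : ℕ} {s : ℕ → ℤ} {m L : ℕ} (h : m + L ≤ p) :
    Wd (Prepend a p s) m L = L * a := by
  unfold Wd
  have hc : ∀ j ∈ Finset.range L, Prepend a p s (m+1+j) = a := fun j hj =>
    prepend_le (by simp only [Finset.mem_range] at hj; omega)
  rw [Finset.sum_congr rfl hc, Finset.sum_const, Finset.card_range, nsmul_eq_mul]

lemma Wd_beyond {a : ℤ} {p : ℕ} {s : ℕ → ℤ} {m L : ℕ} (h : p ≤ m) :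
    Wd (Prepend a p s) m L = Wd s (m - p) L := by
  unfold Wd
  apply Finset.sum_congr rfl
  intro j _
  rw [prepend_gt (by omega)]
  congr 1
  omega

lemma prepend_window_lower {θ : ℝ} {s : ℕ → ℤ} (hs : IsSturmian θ s) (a : ℤ) (p m L : ℕ)
    (hcase : a = 1 ∨ p ≤ m) : (L:ℝ)*θ - 1 < (Wd (Prepend a p s) m L : ℝ) := by
  have hθ1 : θ < 1 := hs.2.1.2
  have hθ0 : 0 < θ := hs.2.1.1
  by_cases hpm : p ≤ m
  · rw [Wd_beyond hpm]
    exact (sturmian_window hs _ _).1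
  · have ha : a = 1 := hcase.resolve_right hpm
    subst ha
    by_cases hL : m + L ≤ p
    · rw [Wd_const hL]
      push_cast
      nlinarith [Nat.cast_nonneg (α := ℝ) L]
    · have hsplit := Wd_add (Prepend 1 p s) m (p-m) (L - (p-m))
      rw [show m + (p-m) = p by omega, show (p-m) + (L - (p-m)) = L by omega] at hsplit
      have h1 : Wd (Prepend 1 p s) m (p-m) = ((p-m : ℕ) : ℤ) * 1 := Wd_const (by omega)
      have h2 : Wd (Prepend 1 p s) p (L - (p-m)) = Wd s 0 (L - (p-m)) := by
        have := Wd_beyond (a := 1) (s := s) (m := p) (L := L - (p-m)) le_rfl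
        simpa using this
      have h3 := (sturmian_window hs 0 (L - (p-m))).1
      rw [hsplit, h1, h2]
      have hc1 : ((L - (p-m) : ℕ) : ℝ) = (L:ℝ) - ((p:ℝ) - (m:ℝ)) := by
        push_cast [Nat.cast_sub (by omega : p - m ≤ L), Nat.cast_sub (by omega : m ≤ p)]
        ring
      rw [hc1] at h3
      have hpm' : (m:ℝ) ≤ (p:ℝ) := by exact_mod_cast (by omega : m ≤ p)
      push_cast [Nat.cast_sub (by omega : m ≤ p)]
      nlinarith [h3]

lemma prepend_window_upper {θ : ℝ} {s : ℕ → ℤ} (hs : IsSturmian θ s) (a : ℤ) (p m L : ℕ)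
    (hcase : a = 0 ∨ p ≤ m) : (Wd (Prepend a p s) m L : ℝ) < (L:ℝ)*θ + 1 := by
  have hθ1 : θ < 1 := hs.2.1.2
  have hθ0 : 0 < θ := hs.2.1.1
  by_cases hpm : p ≤ m
  · rw [Wd_beyond hpm]
    exact (sturmian_window hs _ _).2
  · have ha : a = 0 := hcase.resolve_right hpm
    subst ha
    by_cases hL : m + L ≤ p
    · rw [Wd_const hL]
      push_cast
      nlinarith [Nat.cast_nonneg (α := ℝ) L]
    · have hsplit := Wd_add (Prepend 0 p s) m (p-m) (L - (p-m))
      rw [show m + (p-m) = p by omega, show (p-m) + (L - (p-m)) = L by omega] at hsplit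
      have h1 : Wd (Prepend 0 p s) m (p-m) = ((p-m : ℕ) : ℤ) * 0 := Wd_const (by omega)
      have h2 : Wd (Prepend 0 p s) p (L - (p-m)) = Wd s 0 (L - (p-m)) := by
        have := Wd_beyond (a := 0) (s := s) (m := p) (L := L - (p-m)) le_rfl
        simpa using this
      have h3 := (sturmian_window hs 0 (L - (p-m))).2
      rw [hsplit, h1, h2]
      have hc1 : ((L - (p-m) : ℕ) : ℝ) = (L:ℝ) - ((p:ℝ) - (m:ℝ)) := by
        push_cast [Nat.cast_sub (by omega : p - m ≤ L), Nat.cast_sub (by omega : m ≤ p)]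
        ring
      rw [hc1] at h3
      have hpm' : (m:ℝ) ≤ (p:ℝ) := by exact_mod_cast (by omega : m ≤ p)
      push_cast
      nlinarith [h3]

/-- The core combinatorial lemma: partial sums of u - u' stay nonnegative. -/
lemma core_T {θ : ℝ} {s s' : ℕ → ℤ} (hs : IsSturmian θ s) (hs' : IsSturmian θ s')
    {a a' : ℤ} {p p' k0 : ℕ} (hk0 : 1 ≤ k0)
    (hagree : ∀ k, 1 ≤ k → k < k0 → Prepend a p s k = Prepend a' p' s' k)
    (hu : Prepend a p s k0 = 1) (hu' : Prepend a' p' s' k0 = 0) :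
    (1 ≤ Wd (Prepend a p s) 0 k0 - Wd (Prepend a' p' s') 0 k0) ∧
    ∀ N, 0 ≤ Wd (Prepend a p s) 0 N - Wd (Prepend a' p' s') 0 N := by
  set u := Prepend a p s with hudef
  set u' := Prepend a' p' s' with hudef'
  have hagree' : ∀ M, M < k0 → Wd u 0 M = Wd u' 0 M := by
    intro M hM
    unfold Wd
    apply Finset.sum_congr rfl
    intro j hj
    simp only [Finset.mem_range] at hj
    exact hagree (0+1+j) (by omega) (by omega)
  have hTk0 : 1 ≤ Wd u 0 k0 - Wd u' 0 k0 := by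
    have e : k0 = (k0 - 1) + 1 := by omega
    rw [e, Wd_succ, Wd_succ, hagree' (k0-1) (by omega)]
    have e2 : (0 + 1 + (k0 - 1)) = k0 := by omega
    rw [e2, hu, hu']
    omega
  refine ⟨hTk0, fun N => ?_⟩
  by_cases hN : N < k0
  · rw [hagree' N hN]; omega
  · push_neg at hN
    have hsplitu := Wd_add u 0 k0 (N - k0)
    rw [show k0 + (N - k0) = N by omega, show (0:ℕ) + k0 = k0 by omega] at hsplitu
    have hsplitu' := Wd_add u' 0 k0 (N - k0)
    rw [show k0 + (N - k0) = N by omega, show (0:ℕ) + k0 = k0 by omega] at hsplitu'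
    have hcase : a = 1 ∨ p ≤ k0 := by
      by_cases hp : k0 ≤ p
      · left; rw [hudef, prepend_le hp] at hu; exact hu
      · right; omega
    have hcase' : a' = 0 ∨ p' ≤ k0 := by
      by_cases hp : k0 ≤ p'
      · left; rw [hudef', prepend_le hp] at hu'; exact hu'
      · right; omega
    have hlow := prepend_window_lower hs a p k0 (N - k0) hcase
    have hup := prepend_window_upper hs' a' p' k0 (N - k0) hcase'
    have hmid : (-2:ℤ) < Wd u k0 (N - k0) - Wd u' k0 (N - k0) := by
      have h2 : (-2:ℝ) < ((Wd u k0 (N - k0) - Wd u' k0 (N - k0) : ℤ) : ℝ) := by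
        push_cast
        linarith
      exact_mod_cast h2
    rw [hsplitu, hsplitu']
    omega

end Stmt17aux

namespace Stmt17aux

set_option maxHeartbeats 1600000 in
lemma abel_pos (ρ : ℝ) (hρ0 : 0 < ρ) (hρ1 : ρ < 1) (c T : ℕ → ℤ)
    (hT0 : T 0 = 0) (hTc : ∀ N, T (N+1) = T N + c (N+1))
    (hTnn : ∀ N, 0 ≤ T N) (hTlin : ∀ N, T N ≤ N)
    (k0 : ℕ) (hk0 : 1 ≤ T k0) :
    0 < ∑' k : ℕ, (c (k+1) : ℝ) * ρ^(k+1) := by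
  have hρn : ‖ρ‖ < 1 := by rw [Real.norm_eq_abs, abs_of_pos hρ0]; exact hρ1
  have hg : Summable (fun N : ℕ => (N:ℝ) * ρ^N) := by
    have := summable_pow_mul_geometric_of_norm_lt_one (R := ℝ) 1 hρn
    apply this.congr
    intro N
    rw [pow_one]
  have hf : Summable (fun N => (T N : ℝ) * ρ^N) := by
    apply Summable.of_norm_bounded hg
    intro N
    rw [Real.norm_eq_abs, abs_mul, abs_of_nonneg (pow_nonneg hρ0.le N)]
    have h1 : |(T N : ℝ)| ≤ (N : ℝ) := by
      rw [abs_of_nonneg (by exact_mod_cast hTnn N)]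
      exact_mod_cast hTlin N
    have h2 : (0:ℝ) ≤ ρ^N := pow_nonneg hρ0.le N
    exact mul_le_mul_of_nonneg_right h1 h2
  have hf1 : Summable (fun N => (T (N+1) : ℝ) * ρ^(N+1)) := (summable_nat_add_iff 1).2 hf
  have hf2 : Summable (fun N => (T N : ℝ) * ρ^(N+1)) := by
    apply (hf.mul_left ρ).congr
    intro N; ring
  have key : ∑' k : ℕ, (c (k+1) : ℝ) * ρ^(k+1)
      = (∑' k : ℕ, (T (k+1):ℝ)*ρ^(k+1)) - ∑' k : ℕ, (T k:ℝ)*ρ^(k+1) := by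
    rw [← Summable.tsum_sub hf1 hf2]
    apply tsum_congr; intro k
    have h : (T (k+1) : ℝ) = (T k : ℝ) + (c (k+1) : ℝ) := by exact_mod_cast hTc k
    rw [show (c (k+1):ℝ) * ρ^(k+1) = ((T k:ℝ) + (c (k+1):ℝ)) * ρ^(k+1) - (T k:ℝ)*ρ^(k+1) by ring, ← h]
  have e1 : ∑' k : ℕ, (T (k+1):ℝ)*ρ^(k+1) = (∑' k : ℕ, (T k:ℝ)*ρ^k) - (T 0:ℝ)*ρ^0 := by
    rw [Summable.tsum_eq_zero_add hf]
    ring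
  have e2 : ∑' k : ℕ, (T k:ℝ)*ρ^(k+1) = ρ * ∑' k : ℕ, (T k:ℝ)*ρ^k := by
    rw [← tsum_mul_left]
    apply tsum_congr; intro k; ring
  have hterm : (ρ:ℝ)^k0 ≤ (T k0 : ℝ) * ρ^k0 := by
    have h1 : (1:ℝ) ≤ (T k0 : ℝ) := by exact_mod_cast hk0
    nlinarith [pow_nonneg hρ0.le k0]
  have hS : (T k0:ℝ)*ρ^k0 ≤ ∑' k : ℕ, (T k:ℝ)*ρ^k :=
    Summable.le_tsum hf k0 (fun j _ => mul_nonneg (by exact_mod_cast hTnn j) (pow_nonneg hρ0.le j))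
  have hpos : 0 < ∑' k : ℕ, (T k:ℝ)*ρ^k :=
    lt_of_lt_of_le (pow_pos hρ0 k0) (le_trans hterm hS)
  rw [key, e1, e2, hT0]
  push_cast
  nlinarith [hpos]

end Stmt17aux

namespace Stmt17aux

def Bin1 (v : ℕ → ℤ) : Prop := ∀ i, 1 ≤ i → v i = 0 ∨ v i = 1

lemma bin1_dbl {v : ℕ → ℤ} (hv : Bin1 v) : Bin1 (Dbl v) := fun i hi => hv ((i+1)/2) (by omega)

lemma bin1_prepend {v : ℕ → ℤ} (hv : Bin1 v) {b : ℤ} (hb : b = 0 ∨ b = 1) (l : ℕ) :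
    Bin1 (Prepend b l v) := by
  intro i hi
  by_cases h : i ≤ l
  · rw [prepend_le h]; exact hb
  · rw [prepend_gt (by omega)]; exact hv (i - l) (by omega)

lemma bin1_nonneg {v : ℕ → ℤ} (hv : Bin1 v) {i : ℕ} (hi : 1 ≤ i) : (0:ℝ) ≤ (v i:ℝ) := by
  rcases hv i hi with h | h <;> simp [h]

lemma bin1_le_one {v : ℕ → ℤ} (hv : Bin1 v) {i : ℕ} (hi : 1 ≤ i) : (v i:ℝ) ≤ 1 := by
  rcases hv i hi with h | h <;> simp [h]

lemma summable_letters {v : ℕ → ℤ} (hv : Bin1 v) {x : ℝ} (hx : |x| < 1) :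
    Summable (fun i : ℕ => (v (i+1):ℝ) * x^(i+1)) := by
  have hg : Summable (fun i : ℕ => |x| * |x|^i) :=
    (summable_geometric_of_lt_one (abs_nonneg x) hx).mul_left _
  apply Summable.of_norm_bounded hg
  intro i
  rw [Real.norm_eq_abs, abs_mul, abs_pow]
  have h1 : |(v (i+1):ℝ)| ≤ 1 := by
    rcases hv (i+1) (by omega) with h | h <;> simp [h]
  have h2 : (0:ℝ) ≤ |x|^(i+1) := pow_nonneg (abs_nonneg x) _
  calc |(v (i+1):ℝ)| * |x|^(i+1) ≤ 1 * |x|^(i+1) := mul_le_mul_of_nonneg_right h1 h2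
    _ = |x| * |x|^i := by rw [one_mul, pow_succ]; ring

lemma tval_congr {x : ℝ} {v v' : ℕ → ℤ} (h : ∀ i, 1 ≤ i → v i = v' i) :
    tval x v = tval x v' :=
  tsum_congr (fun i => by rw [h (i+1) (by omega)])

noncomputable def Psum (r : ℝ) (v : ℕ → ℤ) : ℝ := ∑' k : ℕ, (v (k+1):ℝ) * r^(2*k+1)

lemma summable_geo_odd {r : ℝ} (h0 : 0 < r) (h1 : r < 1) :
    Summable (fun k : ℕ => r^(2*k+1)) := by
  have h2 : r^2 < 1 := by nlinarith
  have h2' : (0:ℝ) ≤ r^2 := by positivity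
  apply ((summable_geometric_of_lt_one h2' h2).mul_left r).congr
  intro k
  rw [← pow_mul, ← pow_succ']

lemma summable_P {v : ℕ → ℤ} (hv : Bin1 v) {r : ℝ} (h0 : 0 < r) (h1 : r < 1) :
    Summable (fun k : ℕ => (v (k+1):ℝ) * r^(2*k+1)) := by
  apply Summable.of_norm_bounded (summable_geo_odd h0 h1)
  intro k
  rw [Real.norm_eq_abs, abs_mul]
  have h1' : |(v (k+1):ℝ)| ≤ 1 := by
    rcases hv (k+1) (by omega) with h | h <;> simp [h]
  have h2 : |r^(2*k+1)| = r^(2*k+1) := abs_of_nonneg (by positivity)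
  rw [h2]
  nlinarith [pow_nonneg h0.le (2*k+1), h1']

lemma geo_sum {r : ℝ} (h0 : 0 < r) (h1 : r < 1) :
    ∑' k:ℕ, r^(2*k+1) = r / (1 - r^2) := by
  have h2 : r^2 < 1 := by nlinarith
  have h2' : (0:ℝ) ≤ r^2 := by positivity
  have he : ∀ k:ℕ, r^(2*k+1) = r * (r^2)^k := by
    intro k
    rw [← pow_mul, ← pow_succ']
  rw [tsum_congr he, tsum_mul_left, tsum_geometric_of_lt_one h2' h2, div_eq_mul_inv]

lemma tval_dbl {v : ℕ → ℤ} (hv : Bin1 v) {r : ℝ} (h0 : 0 < r) (h1 : r < 1) :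
    tval (-r) (Dbl v) = (r - 1) * Psum r v := by
  have hd : Bin1 (Dbl v) := bin1_dbl hv
  have habs : |(-r)| < 1 := by rw [abs_neg, abs_of_pos h0]; exact h1
  have hsum := summable_letters hd habs
  have hinj2 : Function.Injective (fun k : ℕ => 2*k) := fun a b h => by simp only at h; omega
  have hinj2' : Function.Injective (fun k : ℕ => 2*k+1) := fun a b h => by simp only at h; omega
  have he : Summable (fun k : ℕ => (Dbl v (2*k+1):ℝ) * (-r)^(2*k+1)) :=
    hsum.comp_injective hinj2
  have ho : Summable (fun k : ℕ => (Dbl v (2*k+1+1):ℝ) * (-r)^(2*k+1+1)) :=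
    hsum.comp_injective hinj2'
  have heq := tsum_even_add_odd (f := fun i : ℕ => (Dbl v (i+1):ℝ) * (-r)^(i+1)) he ho
  have heq2 : (∑' k:ℕ, (Dbl v (2*k+1):ℝ)*(-r)^(2*k+1))
      + (∑' k:ℕ, (Dbl v (2*k+1+1):ℝ)*(-r)^(2*k+1+1)) = tval (-r) (Dbl v) := by
    unfold tval
    exact heq
  have e1 : (∑' k:ℕ, (Dbl v (2*k+1):ℝ) * (-r)^(2*k+1))
      = -(∑' k:ℕ, (v (k+1):ℝ)*r^(2*k+1)) := by
    rw [← tsum_neg]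
    apply tsum_congr
    intro k
    have h3 : Dbl v (2*k+1) = v (k+1) := by simp only [Dbl]; congr 1; omega
    have h4 : (-r)^(2*k+1) = -(r^(2*k+1)) := Odd.neg_pow ⟨k, by ring⟩ r
    rw [h3, h4]; ring
  have e2 : (∑' k:ℕ, (Dbl v (2*k+1+1):ℝ) * (-r)^(2*k+1+1))
      = r * (∑' k:ℕ, (v (k+1):ℝ)*r^(2*k+1)) := by
    rw [← tsum_mul_left]
    apply tsum_congr
    intro k
    have h3 : Dbl v (2*k+1+1) = v (k+1) := by simp only [Dbl]; congr 1; omega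
    have h4 : (-r)^(2*k+1+1) = r^(2*k+1+1) := Even.neg_pow ⟨k+1, by ring⟩ r
    rw [h3, h4, pow_succ]
    ring
  rw [← heq2, e1, e2, Psum]
  ring

lemma tval_prepend1 {v : ℕ → ℤ} (hv : Bin1 v) {b : ℤ} (hb : b = 0 ∨ b = 1)
    {r : ℝ} (h0 : 0 < r) (h1 : r < 1) :
    tval (-r) (Prepend b 1 v) = -(b:ℝ)*r + (-r) * tval (-r) v := by
  have habs : |(-r)| < 1 := by rw [abs_neg, abs_of_pos h0]; exact h1
  have hp : Bin1 (Prepend b 1 v) := bin1_prepend hv hb 1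
  have hsum := summable_letters hp habs
  rw [tval, Summable.tsum_eq_zero_add hsum]
  have h00 : (Prepend b 1 v (0+1):ℝ) * (-r)^(0+1) = -(b:ℝ)*r := by
    rw [prepend_le (le_refl 1)]
    ring
  have hshift : ∀ i:ℕ, (Prepend b 1 v (i+1+1):ℝ) * (-r)^(i+1+1)
      = (-r) * ((v (i+1):ℝ)*(-r)^(i+1)) := by
    intro i
    rw [prepend_gt (by omega)]
    have h5 : (i+1+1) - 1 = i+1 := by omega
    rw [h5, pow_succ]
    ring
  rw [h00]
  congr 1
  rw [tsum_congr hshift, tsum_mul_left, tval]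

lemma Psum_nonneg {v : ℕ → ℤ} (hv : Bin1 v) {r : ℝ} (h0 : 0 < r) :
    0 ≤ Psum r v :=
  tsum_nonneg (fun k => mul_nonneg (bin1_nonneg hv (by omega)) (pow_nonneg h0.le _))

lemma Psum_le {v : ℕ → ℤ} (hv : Bin1 v) {r : ℝ} (h0 : 0 < r) (h1 : r < 1) :
    Psum r v ≤ r / (1 - r^2) := by
  rw [← geo_sum h0 h1]
  apply Summable.tsum_le_tsum _ (summable_P hv h0 h1) (summable_geo_odd h0 h1)
  intro k
  have h2 : (0:ℝ) ≤ r^(2*k+1) := by positivity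
  nlinarith [bin1_le_one hv (show 1 ≤ k+1 by omega), h2]

lemma Psum_witness {v : ℕ → ℤ} (hv : Bin1 v) {r : ℝ} (h0 : 0 < r) (h1 : r < 1)
    {k1 : ℕ} (hk : 1 ≤ k1) (h : v k1 = 1) : r^(2*k1-1) ≤ Psum r v := by
  have hle := Summable.le_tsum (summable_P hv h0 h1) (k1-1)
    (fun j _ => mul_nonneg (bin1_nonneg hv (by omega)) (pow_nonneg h0.le _))
  have he : (v ((k1-1)+1):ℝ) * r^(2*(k1-1)+1) = r^(2*k1-1) := by
    rw [show (k1-1)+1 = k1 by omega, h, show 2*(k1-1)+1 = 2*k1-1 by omega]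
    simp
  rw [he] at hle
  exact hle

lemma Psum_zero_witness {v : ℕ → ℤ} (hv : Bin1 v) {r : ℝ} (h0 : 0 < r) (h1 : r < 1)
    {k1 : ℕ} (hk : 1 ≤ k1) (h : v k1 = 0) :
    Psum r v ≤ r / (1 - r^2) - r^(2*k1-1) := by
  have hgs := summable_geo_odd h0 h1
  have hps := summable_P hv h0 h1
  have hid : r/(1-r^2) - Psum r v = ∑' k:ℕ, (r^(2*k+1) - (v (k+1):ℝ) * r^(2*k+1)) := by
    rw [Summable.tsum_sub hgs hps, geo_sum h0 h1, Psum]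
  have hterm := Summable.le_tsum (hgs.sub hps) (k1-1) (fun j _ => by
    have h2 : (0:ℝ) ≤ r^(2*j+1) := by positivity
    nlinarith [bin1_le_one hv (show 1 ≤ j+1 by omega)])
  have he : r^(2*(k1-1)+1) - (v ((k1-1)+1):ℝ) * r^(2*(k1-1)+1) = r^(2*k1-1) := by
    rw [show (k1-1)+1 = k1 by omega, h, show 2*(k1-1)+1 = 2*k1-1 by omega]
    simp
  rw [he] at hterm
  linarith [hid, hterm]

end Stmt17aux

namespace Stmt17aux

lemma sum_Icc_cast (v : ℕ → ℤ) (n : ℕ) :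
    ∑ i ∈ Finset.Icc 1 n, (v i : ℝ) = ((Wd v 0 n : ℤ) : ℝ) := by
  unfold Wd
  push_cast
  rw [← Finset.Ico_add_one_right_eq_Icc, Finset.sum_Ico_eq_sum_range]
  simp

lemma Wd_dbl_split (s : ℕ → ℤ) : ∀ J, Wd (Dbl s) 0 J = Wd s 0 ((J+1)/2) + Wd s 0 (J/2) := by
  intro J
  induction J with
  | zero => simp [Wd]
  | succ J ih =>
    rw [Wd_succ, ih]
    rcases Nat.even_or_odd J with ⟨t, ht⟩ | ⟨t, ht⟩
    · have e1 : (J+1+1)/2 = t+1 := by omega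
      have e2 : (J+1)/2 = t := by omega
      have e3 : J/2 = t := by omega
      have e4 : Dbl s (0+1+J) = s (0+1+t) := by simp only [Dbl]; congr 1; omega
      rw [e1, e2, e3, e4, Wd_succ]
      ring
    · have e1 : (J+1+1)/2 = t+1 := by omega
      have e2 : (J+1)/2 = t+1 := by omega
      have e3 : J/2 = t := by omega
      have e4 : Dbl s (0+1+J) = s (0+1+t) := by simp only [Dbl]; congr 1; omega
      rw [e1, e2, e3, e4, Wd_succ]
      ring

lemma slope_bound {θ : ℝ} {s : ℕ → ℤ} (hs : IsSturmian θ s) {a : ℤ} (ha : a = 0 ∨ a = 1) (l : ℕ) :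
    ∀ n : ℕ, |((Wd (Prepend a l (Dbl s)) 0 n : ℤ) : ℝ) - n * θ| ≤ 2*l + 3 := by
  intro n
  have hθ0 : 0 < θ := hs.2.1.1
  have hθ1 : θ < 1 := hs.2.1.2
  have ha0 : (0:ℝ) ≤ (a:ℝ) := by rcases ha with h|h <;> simp [h]
  have ha1 : (a:ℝ) ≤ 1 := by rcases ha with h|h <;> simp [h]
  by_cases hn : n ≤ l
  · rw [Wd_const (by omega)]
    have hcast : ((n:ℕ):ℝ) ≤ ((l:ℕ):ℝ) := by exact_mod_cast hn
    have hn0 : (0:ℝ) ≤ (n:ℝ) := Nat.cast_nonneg n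
    have hl0 : (0:ℝ) ≤ (l:ℝ) := Nat.cast_nonneg l
    rw [abs_le]
    push_cast
    constructor <;> nlinarith
  · have hsplit := Wd_add (Prepend a l (Dbl s)) 0 l (n - l)
    rw [show l + (n-l) = n by omega, show (0:ℕ) + l = l by omega] at hsplit
    have h1 : Wd (Prepend a l (Dbl s)) 0 l = (l:ℤ) * a := Wd_const (by omega)
    have h2 : Wd (Prepend a l (Dbl s)) l (n-l) = Wd (Dbl s) 0 (n-l) := by
      have := Wd_beyond (a := a) (s := Dbl s) (m := l) (L := n - l) le_rfl
      simpa using this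
    have h3 := Wd_dbl_split s (n - l)
    have hbA := sturmian_window hs 0 ((n-l+1)/2)
    have hbB := sturmian_window hs 0 ((n-l)/2)
    have hAB : (((n-l+1)/2 : ℕ) : ℝ) + (((n-l)/2 : ℕ) : ℝ) = (n:ℝ) - (l:ℝ) := by
      have : ((n-l+1)/2 : ℕ) + ((n-l)/2 : ℕ) = n - l := by omega
      have h4 : (((n-l):ℕ):ℝ) = (n:ℝ) - l := by
        push_cast [Nat.cast_sub (by omega : l ≤ n)]
        ring
      calc (((n-l+1)/2 : ℕ) : ℝ) + (((n-l)/2 : ℕ) : ℝ)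
          = (((n-l+1)/2 + (n-l)/2 : ℕ) : ℝ) := by push_cast; ring
        _ = (((n - l):ℕ):ℝ) := by rw [this]
        _ = (n:ℝ) - l := h4
    rw [hsplit, h1, h2, h3]
    have hl0 : (0:ℝ) ≤ (l:ℝ) := Nat.cast_nonneg l
    rw [abs_le]
    push_cast
    push_cast at hbA hbB
    constructor <;> nlinarith [hbA.1, hbA.2, hbB.1, hbB.2]

lemma hasSlope_of_bound (θ : ℝ) (v : ℕ → ℤ) (C : ℝ)
    (hb : ∀ n : ℕ, |((Wd v 0 n : ℤ):ℝ) - n*θ| ≤ C) : HasSlope v θ := by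
  unfold HasSlope
  have key : Filter.Tendsto (fun n : ℕ => ((Wd v 0 n:ℤ):ℝ)/n - θ) Filter.atTop (nhds 0) := by
    apply squeeze_zero_norm' (a := fun n : ℕ => C / n)
    · filter_upwards [Filter.eventually_ge_atTop 1] with n hn
      have hn0 : (0:ℝ) < n := by exact_mod_cast hn
      rw [Real.norm_eq_abs]
      have he : ((Wd v 0 n:ℤ):ℝ)/n - θ = (((Wd v 0 n:ℤ):ℝ) - n*θ)/n := by
        field_simp
      rw [he, abs_div, abs_of_pos hn0]
      gcongr
      exact hb n
    · exact tendsto_const_div_atTop_nhds_zero_nat C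
  have h2 : Filter.Tendsto (fun n:ℕ => ((Wd v 0 n:ℤ):ℝ)/n) Filter.atTop (nhds θ) := by
    have h3 := key.add_const θ
    simpa using h3
  apply h2.congr
  intro n
  rw [sum_Icc_cast]

lemma slope_unique {w v : ℕ → ℤ} (h : EqW w v) {θ θs : ℝ}
    (h1 : HasSlope w θ) (h2 : HasSlope v θs) : θ = θs := by
  have h3 : HasSlope w θs := by
    unfold HasSlope at h2 ⊢
    apply h2.congr
    intro n
    congr 1
    apply Finset.sum_congr rfl
    intro i hi
    simp only [Finset.mem_Icc] at hi
    rw [h i hi.1]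
  exact tendsto_nhds_unique h1 h3

lemma normalize {w : ℕ → ℤ} {θ : ℝ} (hw : MemD w) (hsl : HasSlope w θ) :
    ∃ (b : ℤ) (e p : ℕ) (s : ℕ → ℤ), (b = 0 ∨ b = 1) ∧ e ≤ 1 ∧ IsSturmian θ s ∧
      EqW w (Prepend b e (Dbl (Prepend b p s))) := by
  obtain ⟨a, l, s, θs, ha, hs, he⟩ := hw
  have hfun : Prepend a l (Dbl s) = Prepend a (l % 2) (Dbl (Prepend a (l/2) s)) := by
    funext n
    simp only [Prepend, Dbl]
    split_ifs <;> first
      | rfl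
      | omega
      | (congr 1; omega)
  have hslv : HasSlope (Prepend a l (Dbl s)) θs :=
    hasSlope_of_bound θs _ (2*l+3) (slope_bound hs ha l)
  have hθ : θ = θs := slope_unique he hsl hslv
  refine ⟨a, l % 2, l / 2, s, ha, by omega, ?_, ?_⟩
  · rw [hθ]; exact hs
  · rw [hfun] at he
    exact he

end Stmt17aux

namespace Stmt17aux

lemma prepend_zero (b : ℤ) (v : ℕ → ℤ) (i : ℕ) (hi : 1 ≤ i) : Prepend b 0 v i = v i := by
  rw [prepend_gt (by omega), Nat.sub_zero]

lemma Wd_nonneg {v : ℕ → ℤ} (hv : Bin1 v) (m L : ℕ) : 0 ≤ Wd v m L :=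
  Finset.sum_nonneg fun j _ => by rcases hv (m+1+j) (by omega) with h|h <;> simp [h]

lemma Wd_le_len {v : ℕ → ℤ} (hv : Bin1 v) (m L : ℕ) : Wd v m L ≤ L := by
  calc Wd v m L ≤ ∑ _j ∈ Finset.range L, (1:ℤ) :=
        Finset.sum_le_sum (fun j _ => by rcases hv (m+1+j) (by omega) with h|h <;> simp [h])
    _ = L := by simp

lemma lemL {θ r : ℝ} (h0 : 0 < r) (h1 : r < 1) {s s' : ℕ → ℤ}
    (hs : IsSturmian θ s) (hs' : IsSturmian θ s') {b b' : ℤ} {p p' : ℕ}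
    (hb : b = 0 ∨ b = 1) (hb' : b' = 0 ∨ b' = 1) {k0 : ℕ} (hk0 : 1 ≤ k0)
    (hagree : ∀ k, 1 ≤ k → k < k0 → Prepend b p s k = Prepend b' p' s' k)
    (hu : Prepend b p s k0 = 1) (hu' : Prepend b' p' s' k0 = 0) :
    Psum r (Prepend b' p' s') < Psum r (Prepend b p s) := by
  set u := Prepend b p s with hudef
  set u' := Prepend b' p' s' with hudef'
  have hBu : Bin1 u := bin1_prepend (sturmian_binary hs) hb p
  have hBu' : Bin1 u' := bin1_prepend (sturmian_binary hs') hb' p'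
  obtain ⟨hTk0, hTnn⟩ := core_T hs hs' hk0 hagree hu hu'
  have hρ0 : (0:ℝ) < r^2 := by positivity
  have hρ1 : r^2 < 1 := by nlinarith
  have habel := abel_pos (r^2) hρ0 hρ1 (fun k => u k - u' k) (fun N => Wd u 0 N - Wd u' 0 N)
    (by simp [Wd])
    (fun N => by
      show Wd u 0 (N+1) - Wd u' 0 (N+1) = (Wd u 0 N - Wd u' 0 N) + (u (N+1) - u' (N+1))
      rw [Wd_succ, Wd_succ]
      have e : 0+1+N = N+1 := by omega
      rw [e]
      ring)
    hTnn
    (fun N => by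
      show Wd u 0 N - Wd u' 0 N ≤ (N:ℤ)
      have h2 := Wd_le_len hBu 0 N
      have h3 := Wd_nonneg hBu' 0 N
      omega)
    k0 hTk0
  have hsum : ∑' k : ℕ, ((u (k+1) - u' (k+1) : ℤ):ℝ) * (r^2)^(k+1)
      = r * (Psum r u - Psum r u') := by
    rw [Psum, Psum, ← Summable.tsum_sub (summable_P hBu h0 h1) (summable_P hBu' h0 h1), ← tsum_mul_left]
    apply tsum_congr
    intro k
    have he : (r^2)^(k+1) = r * r^(2*k+1) := by
      rw [← pow_mul, show 2*(k+1) = (2*k+1)+1 by ring, pow_succ]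
      ring
    push_cast
    rw [he]
    ring
  rw [hsum] at habel
  nlinarith

lemma caseA {θ r : ℝ} (h0 : 0 < r) (h1 : r < 1) {s s' : ℕ → ℤ}
    (hs : IsSturmian θ s) (hs' : IsSturmian θ s') {b b' : ℤ} {p p' : ℕ}
    (hb : b = 0 ∨ b = 1) (hb' : b' = 0 ∨ b' = 1) {n : ℕ} (hn1 : 1 ≤ n)
    (hagree : ∀ i, 1 ≤ i → i < n → Dbl (Prepend b p s) i = Dbl (Prepend b' p' s') i)
    (hsign : (-1:ℤ)^n * (Dbl (Prepend b' p' s') n - Dbl (Prepend b p s) n) = 1) :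
    tval (-r) (Dbl (Prepend b p s)) < tval (-r) (Dbl (Prepend b' p' s')) := by
  set u := Prepend b p s with hudef
  set u' := Prepend b' p' s' with hudef'
  have hBu : Bin1 u := bin1_prepend (sturmian_binary hs) hb p
  have hBu' : Bin1 u' := bin1_prepend (sturmian_binary hs') hb' p'
  have hodd : n % 2 = 1 := by
    by_contra hpar
    have h2 : 2 ≤ n := by omega
    have e1 : Dbl u n = Dbl u (n-1) := by simp only [Dbl]; congr 1; omega
    have e2 : Dbl u' n = Dbl u' (n-1) := by simp only [Dbl]; congr 1; omega
    have e3 : Dbl u (n-1) = Dbl u' (n-1) := hagree (n-1) (by omega) (by omega)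
    rw [e1, e2, ← e3] at hsign
    simp at hsign
  have hk01 : 1 ≤ (n+1)/2 := by omega
  have hvn : Dbl u n = u ((n+1)/2) := rfl
  have hvn' : Dbl u' n = u' ((n+1)/2) := rfl
  have hne : (-1:ℤ)^n = -1 := Odd.neg_one_pow ⟨n/2, by omega⟩
  rw [hne, hvn, hvn'] at hsign
  have hb1 := hBu ((n+1)/2) hk01
  have hb2 := hBu' ((n+1)/2) hk01
  have huk : u ((n+1)/2) = 1 := by omega
  have huk' : u' ((n+1)/2) = 0 := by omega
  have hagreeu : ∀ k, 1 ≤ k → k < (n+1)/2 → u k = u' k := by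
    intro k hk hkk
    have e1 : Dbl u (2*k-1) = u k := by simp only [Dbl]; congr 1; omega
    have e2 : Dbl u' (2*k-1) = u' k := by simp only [Dbl]; congr 1; omega
    rw [← e1, ← e2]
    exact hagree (2*k-1) (by omega) (by omega)
  have hP := lemL h0 h1 hs hs' hb hb' hk01 hagreeu huk huk'
  rw [tval_dbl hBu h0 h1, tval_dbl hBu' h0 h1]
  nlinarith [mul_pos (show (0:ℝ) < 1 - r by linarith)
    (show (0:ℝ) < Psum r (Prepend b p s) - Psum r (Prepend b' p' s') by linarith)]

lemma caseD {θ r : ℝ} (h0 : 0 < r) (h1 : r < 1) {s s' : ℕ → ℤ}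
    (hs : IsSturmian θ s) (hs' : IsSturmian θ s') {b b' : ℤ} {p p' : ℕ}
    (hb : b = 0 ∨ b = 1) (hb' : b' = 0 ∨ b' = 1) {n : ℕ} (hn1 : 1 ≤ n)
    (hagree : ∀ i, 1 ≤ i → i < n →
      Prepend b 1 (Dbl (Prepend b p s)) i = Prepend b' 1 (Dbl (Prepend b' p' s')) i)
    (hsign : (-1:ℤ)^n * (Prepend b' 1 (Dbl (Prepend b' p' s')) n
      - Prepend b 1 (Dbl (Prepend b p s)) n) = 1) :
    tval (-r) (Prepend b 1 (Dbl (Prepend b p s)))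
      < tval (-r) (Prepend b' 1 (Dbl (Prepend b' p' s'))) := by
  set u := Prepend b p s with hudef
  set u' := Prepend b' p' s' with hudef'
  have hBu : Bin1 u := bin1_prepend (sturmian_binary hs) hb p
  have hBu' : Bin1 u' := bin1_prepend (sturmian_binary hs') hb' p'
  by_cases hbb : b = b'
  · have hne2 : 2 ≤ n := by
      rcases Nat.lt_or_ge n 2 with hn2 | hn2
      · exfalso
        have hn' : n = 1 := by omega
        subst hn'
        rw [prepend_le le_rfl, prepend_le le_rfl, hbb] at hsign
        simp at hsign
      · exact hn2
    have heven : n % 2 = 0 := by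
      by_contra hpar
      have e1 : Prepend b 1 (Dbl u) n = Prepend b 1 (Dbl u) (n-1) := by
        rw [prepend_gt (by omega), prepend_gt (by omega)]
        simp only [Dbl]; congr 1; omega
      have e2 : Prepend b' 1 (Dbl u') n = Prepend b' 1 (Dbl u') (n-1) := by
        rw [prepend_gt (by omega), prepend_gt (by omega)]
        simp only [Dbl]; congr 1; omega
      have e3 := hagree (n-1) (by omega) (by omega)
      rw [e1, e2, ← e3] at hsign
      simp at hsign
    have hk01 : 1 ≤ n/2 := by omega
    have evn : Prepend b 1 (Dbl u) n = u (n/2) := by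
      rw [prepend_gt (by omega)]; simp only [Dbl]; congr 1; omega
    have evn' : Prepend b' 1 (Dbl u') n = u' (n/2) := by
      rw [prepend_gt (by omega)]; simp only [Dbl]; congr 1; omega
    have hne : (-1:ℤ)^n = 1 := Even.neg_one_pow ⟨n/2, by omega⟩
    rw [hne, one_mul, evn, evn'] at hsign
    have hb1 := hBu (n/2) hk01
    have hb2 := hBu' (n/2) hk01
    have huk : u (n/2) = 0 := by omega
    have huk' : u' (n/2) = 1 := by omega
    have hagreeu : ∀ k, 1 ≤ k → k < n/2 → u' k = u k := by
      intro k hk hkk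
      have e1 : Prepend b 1 (Dbl u) (2*k) = u k := by
        rw [prepend_gt (by omega)]; simp only [Dbl]; congr 1; omega
      have e2 : Prepend b' 1 (Dbl u') (2*k) = u' k := by
        rw [prepend_gt (by omega)]; simp only [Dbl]; congr 1; omega
      rw [← e1, ← e2]
      exact (hagree (2*k) (by omega) (by omega)).symm
    have hP := lemL h0 h1 hs' hs hb' hb hk01 hagreeu huk' huk
    rw [tval_prepend1 (bin1_dbl hBu) hb h0 h1, tval_prepend1 (bin1_dbl hBu') hb' h0 h1,
      tval_dbl hBu h0 h1, tval_dbl hBu' h0 h1, hbb]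
    nlinarith [mul_pos (mul_pos h0 (show (0:ℝ) < 1 - r by linarith))
      (show (0:ℝ) < Psum r u' - Psum r u by linarith)]
  · have hn' : n = 1 := by
      by_contra hne
      have := hagree 1 le_rfl (by omega)
      rw [prepend_le le_rfl, prepend_le le_rfl] at this
      exact hbb this
    subst hn'
    rw [prepend_le le_rfl, prepend_le le_rfl] at hsign
    have hbv : b = 1 := by omega
    have hbv' : b' = 0 := by omega
    subst hbv; subst hbv'
    rw [tval_prepend1 (bin1_dbl hBu) (Or.inr rfl) h0 h1,
      tval_prepend1 (bin1_dbl hBu') (Or.inl rfl) h0 h1,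
      tval_dbl hBu h0 h1, tval_dbl hBu' h0 h1]
    have hPle := Psum_le hBu h0 h1
    have hP'nn := Psum_nonneg hBu' h0
    have hk1 : (0:ℝ) ≤ r*(1-r) := by nlinarith
    have key := mul_le_mul_of_nonneg_left hPle hk1
    have h1r2 : (0:ℝ) < 1 - r^2 := by nlinarith
    have key2 : r*(1-r)*(r/(1-r^2)) < r := by
      have he : r*(1-r)*(r/(1-r^2)) = r^2/(1+r) := by
        field_simp
        ring
      rw [he, div_lt_iff₀ (by linarith : (0:ℝ) < 1+r)]
      nlinarith
    push_cast
    nlinarith [key, key2, mul_nonneg (mul_nonneg h0.le (show (0:ℝ) ≤ 1-r by linarith)) hP'nn]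

lemma caseB {r : ℝ} (h0 : 0 < r) (h1 : r < 1) {u u' : ℕ → ℤ} {b' : ℤ}
    (hBu : Bin1 u) (hBu' : Bin1 u') (hb' : b' = 0 ∨ b' = 1) {n : ℕ} (hn1 : 1 ≤ n)
    (hagree : ∀ i, 1 ≤ i → i < n → Dbl u i = Prepend b' 1 (Dbl u') i)
    (hsign : (-1:ℤ)^n * (Prepend b' 1 (Dbl u') n - Dbl u n) = 1) :
    tval (-r) (Dbl u) < tval (-r) (Prepend b' 1 (Dbl u')) := by
  have hchain : ∀ i, 1 ≤ i → i < n → Dbl u i = b' ∧ Prepend b' 1 (Dbl u') i = b' := by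
    intro i
    induction i using Nat.strong_induction_on with
    | _ i ih =>
    intro hi1 hin
    rcases Nat.lt_or_ge i 2 with hi2 | hi2
    · have hi : i = 1 := by omega
      subst hi
      have h2 : Prepend b' 1 (Dbl u') 1 = b' := prepend_le le_rfl
      exact ⟨(hagree 1 le_rfl hin).trans h2, h2⟩
    · rcases Nat.even_or_odd i with ⟨t, ht⟩ | ⟨t, ht⟩
      · have e1 : Dbl u i = Dbl u (i-1) := by simp only [Dbl]; congr 1; omega
        have hprev := ih (i-1) (by omega) (by omega) (by omega)
        refine ⟨e1.trans hprev.1, ?_⟩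
        rw [← hagree i hi1 hin, e1, hprev.1]
      · have e1 : Prepend b' 1 (Dbl u') i = Prepend b' 1 (Dbl u') (i-1) := by
          rw [prepend_gt (by omega), prepend_gt (by omega)]
          simp only [Dbl]; congr 1; omega
        have hprev := ih (i-1) (by omega) (by omega) (by omega)
        refine ⟨?_, e1.trans hprev.2⟩
        rw [hagree i hi1 hin, e1, hprev.2]
  have hwit : b' = 0 ∧ ∃ k, 1 ≤ k ∧ (u k = 1 ∨ u' k = 1) := by
    rcases Nat.lt_or_ge n 2 with hn2 | hn2
    · have hn' : n = 1 := by omega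
      subst hn'
      rw [prepend_le le_rfl] at hsign
      have hv : Dbl u 1 = u 1 := rfl
      rw [hv, pow_one] at hsign
      have hb1 := hBu 1 le_rfl
      exact ⟨by omega, 1, le_rfl, Or.inl (by omega)⟩
    · rcases Nat.even_or_odd n with ⟨t, ht⟩ | ⟨t, ht⟩
      · have e1 : Dbl u n = Dbl u (n-1) := by simp only [Dbl]; congr 1; omega
        have hc := hchain (n-1) (by omega) (by omega)
        have hDn : Dbl u n = b' := e1.trans hc.1
        have hVn : Prepend b' 1 (Dbl u') n = u' (n/2) := by
          rw [prepend_gt (by omega)]; simp only [Dbl]; congr 1; omega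
        have hne : (-1:ℤ)^n = 1 := Even.neg_one_pow ⟨t, by omega⟩
        rw [hne, one_mul, hDn, hVn] at hsign
        have hb1 := hBu' (n/2) (by omega)
        exact ⟨by omega, n/2, by omega, Or.inr (by omega)⟩
      · have e1 : Prepend b' 1 (Dbl u') n = Prepend b' 1 (Dbl u') (n-1) := by
          rw [prepend_gt (by omega), prepend_gt (by omega)]
          simp only [Dbl]; congr 1; omega
        have hc := hchain (n-1) (by omega) (by omega)
        have hVn : Prepend b' 1 (Dbl u') n = b' := e1.trans hc.2
        have hDn : Dbl u n = u ((n+1)/2) := rfl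
        have hne : (-1:ℤ)^n = -1 := Odd.neg_one_pow ⟨t, by omega⟩
        rw [hne, hVn, hDn] at hsign
        have hb1 := hBu ((n+1)/2) (by omega)
        exact ⟨by omega, (n+1)/2, by omega, Or.inl (by omega)⟩
  obtain ⟨hb0, k, hk1, hk⟩ := hwit
  subst hb0
  rw [tval_dbl hBu h0 h1, tval_prepend1 (bin1_dbl hBu') (Or.inl rfl) h0 h1, tval_dbl hBu' h0 h1]
  have hPnn := Psum_nonneg hBu h0
  have hP'nn := Psum_nonneg hBu' h0
  have hpow : (0:ℝ) < r^(2*k-1) := pow_pos h0 _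
  rcases hk with hk | hk
  · have hw := Psum_witness hBu h0 h1 hk1 hk
    push_cast
    nlinarith [mul_pos (show (0:ℝ) < 1-r by linarith) hpow,
      mul_nonneg (mul_nonneg h0.le (show (0:ℝ) ≤ 1-r by linarith)) hP'nn,
      mul_le_mul_of_nonneg_left hw (show (0:ℝ) ≤ 1-r by linarith)]
  · have hw := Psum_witness hBu' h0 h1 hk1 hk
    push_cast
    nlinarith [mul_nonneg (show (0:ℝ) ≤ 1-r by linarith) hPnn,
      mul_pos (mul_pos h0 (show (0:ℝ) < 1-r by linarith)) hpow,
      mul_le_mul_of_nonneg_left hw (show (0:ℝ) ≤ r*(1-r) by nlinarith)]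

lemma caseC {r : ℝ} (h0 : 0 < r) (h1 : r < 1) {u u' : ℕ → ℤ} {b : ℤ}
    (hBu : Bin1 u) (hBu' : Bin1 u') (hb : b = 0 ∨ b = 1) {n : ℕ} (hn1 : 1 ≤ n)
    (hagree : ∀ i, 1 ≤ i → i < n → Prepend b 1 (Dbl u) i = Dbl u' i)
    (hsign : (-1:ℤ)^n * (Dbl u' n - Prepend b 1 (Dbl u) n) = 1) :
    tval (-r) (Prepend b 1 (Dbl u)) < tval (-r) (Dbl u') := by
  have hchain : ∀ i, 1 ≤ i → i < n → Prepend b 1 (Dbl u) i = b ∧ Dbl u' i = b := by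
    intro i
    induction i using Nat.strong_induction_on with
    | _ i ih =>
    intro hi1 hin
    rcases Nat.lt_or_ge i 2 with hi2 | hi2
    · have hi : i = 1 := by omega
      subst hi
      have h2 : Prepend b 1 (Dbl u) 1 = b := prepend_le le_rfl
      exact ⟨h2, ((hagree 1 le_rfl hin).symm).trans h2⟩
    · rcases Nat.even_or_odd i with ⟨t, ht⟩ | ⟨t, ht⟩
      · have e1 : Dbl u' i = Dbl u' (i-1) := by simp only [Dbl]; congr 1; omega
        have hprev := ih (i-1) (by omega) (by omega) (by omega)
        refine ⟨?_, e1.trans hprev.2⟩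
        rw [hagree i hi1 hin, e1, hprev.2]
      · have e1 : Prepend b 1 (Dbl u) i = Prepend b 1 (Dbl u) (i-1) := by
          rw [prepend_gt (by omega), prepend_gt (by omega)]
          simp only [Dbl]; congr 1; omega
        have hprev := ih (i-1) (by omega) (by omega) (by omega)
        refine ⟨e1.trans hprev.1, ?_⟩
        rw [← hagree i hi1 hin, e1, hprev.1]
  have hwit : b = 1 ∧ ∃ k, 1 ≤ k ∧ (u k = 0 ∨ u' k = 0) := by
    rcases Nat.lt_or_ge n 2 with hn2 | hn2
    · have hn' : n = 1 := by omega
      subst hn'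
      rw [prepend_le le_rfl] at hsign
      have hv : Dbl u' 1 = u' 1 := rfl
      rw [hv, pow_one] at hsign
      have hb1 := hBu' 1 le_rfl
      exact ⟨by omega, 1, le_rfl, Or.inr (by omega)⟩
    · rcases Nat.even_or_odd n with ⟨t, ht⟩ | ⟨t, ht⟩
      · have e1 : Dbl u' n = Dbl u' (n-1) := by simp only [Dbl]; congr 1; omega
        have hc := hchain (n-1) (by omega) (by omega)
        have hDn : Dbl u' n = b := e1.trans hc.2
        have hVn : Prepend b 1 (Dbl u) n = u (n/2) := by
          rw [prepend_gt (by omega)]; simp only [Dbl]; congr 1; omega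
        have hne : (-1:ℤ)^n = 1 := Even.neg_one_pow ⟨t, by omega⟩
        rw [hne, one_mul, hDn, hVn] at hsign
        have hb1 := hBu (n/2) (by omega)
        exact ⟨by omega, n/2, by omega, Or.inl (by omega)⟩
      · have e1 : Prepend b 1 (Dbl u) n = Prepend b 1 (Dbl u) (n-1) := by
          rw [prepend_gt (by omega), prepend_gt (by omega)]
          simp only [Dbl]; congr 1; omega
        have hc := hchain (n-1) (by omega) (by omega)
        have hVn : Prepend b 1 (Dbl u) n = b := e1.trans hc.1
        have hDn : Dbl u' n = u' ((n+1)/2) := rfl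
        have hne : (-1:ℤ)^n = -1 := Odd.neg_one_pow ⟨t, by omega⟩
        rw [hne, hVn, hDn] at hsign
        have hb1 := hBu' ((n+1)/2) (by omega)
        exact ⟨by omega, (n+1)/2, by omega, Or.inr (by omega)⟩
  obtain ⟨hb1v, k, hk1, hk⟩ := hwit
  subst hb1v
  rw [tval_dbl hBu' h0 h1, tval_prepend1 (bin1_dbl hBu) (Or.inr rfl) h0 h1, tval_dbl hBu h0 h1]
  have hpow : (0:ℝ) < r^(2*k-1) := pow_pos h0 _
  have h1r2 : (0:ℝ) < 1 - r^2 := by nlinarith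
  have hG : (1-r)*(r/(1-r^2))*(1+r) = r := by
    field_simp
    ring
  rcases hk with hk | hk
  · have hzw := Psum_zero_witness hBu h0 h1 hk1 hk
    have hP'le := Psum_le hBu' h0 h1
    push_cast
    nlinarith [hG, mul_le_mul_of_nonneg_left hzw (show (0:ℝ) ≤ r*(1-r) by nlinarith),
      mul_le_mul_of_nonneg_left hP'le (show (0:ℝ) ≤ 1-r by linarith),
      mul_pos (mul_pos h0 (show (0:ℝ) < 1-r by linarith)) hpow]
  · have hzw := Psum_zero_witness hBu' h0 h1 hk1 hk
    have hPle := Psum_le hBu h0 h1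
    push_cast
    nlinarith [hG, mul_le_mul_of_nonneg_left hzw (show (0:ℝ) ≤ 1-r by linarith),
      mul_le_mul_of_nonneg_left hPle (show (0:ℝ) ≤ r*(1-r) by nlinarith),
      mul_pos (show (0:ℝ) < 1-r by linarith) hpow]

end Stmt17aux

theorem stmt17 (r θ : ℝ) (h0 : 0 < r) (h1 : r < 1) (w w' : ℕ → ℤ)
    (hw : MemD w) (hw' : MemD w') (h : HasSlope w θ) (h' : HasSlope w' θ)
    (hlt : AltLt w w') : tval (-r) w < tval (-r) w' := by
  obtain ⟨b, e, p, s, hb, hele, hs, hEq⟩ := Stmt17aux.normalize hw h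
  obtain ⟨b', e', p', s', hb', hele', hs', hEq'⟩ := Stmt17aux.normalize hw' h'
  obtain ⟨n, hn1, hagree0, hsign0⟩ := hlt
  have htv : tval (-r) w = tval (-r) (Prepend b e (Dbl (Prepend b p s))) :=
    Stmt17aux.tval_congr hEq
  have htv' : tval (-r) w' = tval (-r) (Prepend b' e' (Dbl (Prepend b' p' s'))) :=
    Stmt17aux.tval_congr hEq'
  rw [htv, htv']
  have hagree : ∀ i, 1 ≤ i → i < n →
      Prepend b e (Dbl (Prepend b p s)) i = Prepend b' e' (Dbl (Prepend b' p' s')) i :=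
    fun i hi hin => by rw [← hEq i hi, ← hEq' i hi]; exact hagree0 i hi hin
  have hsign : (-1:ℤ)^n * (Prepend b' e' (Dbl (Prepend b' p' s')) n
      - Prepend b e (Dbl (Prepend b p s)) n) = 1 := by
    rw [← hEq n hn1, ← hEq' n hn1]
    exact hsign0
  have hBu : Stmt17aux.Bin1 (Prepend b p s) :=
    Stmt17aux.bin1_prepend (Stmt17aux.sturmian_binary hs) hb p
  have hBu' : Stmt17aux.Bin1 (Prepend b' p' s') :=
    Stmt17aux.bin1_prepend (Stmt17aux.sturmian_binary hs') hb' p'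
  interval_cases e <;> interval_cases e'
  · -- e = 0, e' = 0
    rw [Stmt17aux.tval_congr (fun i hi => Stmt17aux.prepend_zero b _ i hi),
        Stmt17aux.tval_congr (fun i hi => Stmt17aux.prepend_zero b' _ i hi)]
    exact Stmt17aux.caseA h0 h1 hs hs' hb hb' hn1
      (fun i hi hin => by
        rw [← Stmt17aux.prepend_zero b (Dbl (Prepend b p s)) i hi,
          ← Stmt17aux.prepend_zero b' (Dbl (Prepend b' p' s')) i hi]
        exact hagree i hi hin)
      (by
        rw [← Stmt17aux.prepend_zero b (Dbl (Prepend b p s)) n hn1,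
          ← Stmt17aux.prepend_zero b' (Dbl (Prepend b' p' s')) n hn1]
        exact hsign)
  · -- e = 0, e' = 1
    rw [Stmt17aux.tval_congr (fun i hi => Stmt17aux.prepend_zero b _ i hi)]
    exact Stmt17aux.caseB h0 h1 hBu hBu' hb' hn1
      (fun i hi hin => by
        rw [← Stmt17aux.prepend_zero b (Dbl (Prepend b p s)) i hi]
        exact hagree i hi hin)
      (by
        rw [← Stmt17aux.prepend_zero b (Dbl (Prepend b p s)) n hn1]
        exact hsign)
  · -- e = 1, e' = 0
    rw [Stmt17aux.tval_congr (fun i hi => Stmt17aux.prepend_zero b' _ i hi)]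
    exact Stmt17aux.caseC h0 h1 hBu hBu' hb hn1
      (fun i hi hin => by
        rw [← Stmt17aux.prepend_zero b' (Dbl (Prepend b' p' s')) i hi]
        exact hagree i hi hin)
      (by
        rw [← Stmt17aux.prepend_zero b' (Dbl (Prepend b' p' s')) n hn1]
        exact hsign)
  · -- e = 1, e' = 1
    exact Stmt17aux.caseD h0 h1 hs hs' hb hb' hn1 hagree hsign
end

section
/- An aperiodic binary sequence w is Sturmian if and only if there exists an infinite binary sequence u such that 0u ≼_lex T^n w ≼_lex 1u for all n ≥ 0, where T is the shift. Moreover, in that case u must equal the characteristic Sturmian word c_θ of the slope θ of w, and 0c_θ = inf_lex{T^n w : n ≥ 0}, 1c_θ = sup_lex{T^n w : n ≥ 0}. -/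
section Part1

open Finset

/-- window sum: sum of w (k+1) .. w (k+n) -/
def Wnd (w : ℕ → ℤ) (k n : ℕ) : ℤ := ∑ i ∈ Finset.Icc 1 n, w (k+i)

lemma Wnd_zero (w : ℕ → ℤ) (k : ℕ) : Wnd w k 0 = 0 := by simp [Wnd]

lemma Wnd_succ (w : ℕ → ℤ) (k n : ℕ) : Wnd w k (n+1) = Wnd w k n + w (k+(n+1)) := by
  unfold Wnd
  exact Finset.sum_Icc_succ_top (by omega) _

lemma Wnd_split (w : ℕ → ℤ) (k a b : ℕ) : Wnd w k (a+b) = Wnd w k a + Wnd w (k+a) b := by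
  induction b with
  | zero => simp [Wnd_zero]
  | succ b ih =>
      have : a + (b+1) = (a+b) + 1 := by ring
      rw [this, Wnd_succ, ih, Wnd_succ]
      have : k + a + (b+1) = k + (a+b+1) := by ring
      rw [this]; ring

lemma Wnd_congr {w w' : ℕ → ℤ} {k j : ℕ} (n : ℕ)
    (h : ∀ i, 1 ≤ i → i ≤ n → w (k+i) = w' (j+i)) : Wnd w k n = Wnd w' j n := by
  apply Finset.sum_congr rfl
  intro i hi
  rw [Finset.mem_Icc] at hi
  exact h i hi.1 hi.2

lemma Wnd_nonneg {w : ℕ → ℤ} (hb : IsBinary w) (k n : ℕ) : 0 ≤ Wnd w k n := by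
  apply Finset.sum_nonneg
  intro i _
  rcases hb (k+i) with h | h <;> omega

lemma shf_iter (w : ℕ → ℤ) (k n : ℕ) : Shf^[k] w n = w (n + k) := by
  induction k generalizing w n with
  | zero => simp
  | succ k ih =>
      rw [Function.iterate_succ_apply, ih]
      show w (n + k + 1) = w (n + (k+1))
      congr 1

lemma firstDiff {s t : ℕ → ℤ} (h : ¬ EqW s t) :
    ∃ m, 1 ≤ m ∧ (∀ i, 1 ≤ i → i < m → s i = t i) ∧ s m ≠ t m := by
  classical
  have h' : ∃ m, 1 ≤ m ∧ s m ≠ t m := by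
    by_contra hc
    push_neg at hc
    exact h fun i hi => hc i hi
  obtain ⟨hm1, hmne⟩ := Nat.find_spec h'
  refine ⟨Nat.find h', hm1, ?_, hmne⟩
  intro i hi hilt
  by_contra hne
  exact Nat.find_min h' hilt ⟨hi, hne⟩

lemma not_lexle_of {A B : ℕ → ℤ} {m : ℕ} (hm : 1 ≤ m)
    (hagree : ∀ i, 1 ≤ i → i < m → A i = B i) (h : B m < A m) : ¬ LexLe A B := by
  rintro (⟨n, hn1, hagr, hlt⟩ | heq)
  · rcases lt_trichotomy n m with hc | hc | hc
    · have := hagree n hn1 hc; omega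
    · subst hc; omega
    · have := hagr m hm hc; omega
  · have := heq m hm; omega

lemma lexle_shf {s t : ℕ → ℤ} (h1 : s 1 = t 1) (h : LexLe s t) : LexLe (Shf s) (Shf t) := by
  rcases h with ⟨n, hn1, hagr, hlt⟩ | heq
  · have hn2 : 2 ≤ n := by
      rcases Nat.lt_or_ge n 2 with h2 | h2
      · exfalso; have : n = 1 := by omega
        subst this; omega
      · exact h2
    left
    refine ⟨n-1, by omega, ?_, ?_⟩
    · intro i hi hilt
      exact hagr (i+1) (by omega) (by omega)
    · show s (n-1+1) < t (n-1+1)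
      rw [Nat.sub_add_cancel (by omega)]
      exact hlt
  · right; intro i hi; exact heq (i+1) (by omega)

lemma lexle_of_sums {s t : ℕ → ℤ}
    (h : ∀ n, 1 ≤ n → Wnd s 0 n ≤ Wnd t 0 n) : LexLe s t := by
  by_cases he : EqW s t
  · exact Or.inr he
  obtain ⟨m, hm1, hagr, hne⟩ := firstDiff he
  obtain ⟨m', rfl⟩ : ∃ m', m = m' + 1 := ⟨m - 1, by omega⟩
  left
  refine ⟨m'+1, hm1, hagr, ?_⟩
  have hsum : Wnd s 0 m' = Wnd t 0 m' := by
    apply Wnd_congr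
    intro i hi hile
    exact hagr (0+i) (by omega) (by omega)
  have h2 := h (m'+1) (by omega)
  rw [Wnd_succ, Wnd_succ, hsum] at h2
  have : s (0+(m'+1)) ≤ t (0+(m'+1)) := by omega
  simp only [Nat.zero_add] at this
  omega

lemma binary_shf_iter {w : ℕ → ℤ} (hb : IsBinary w) (n : ℕ) : IsBinary (Shf^[n] w) := by
  intro i; rw [shf_iter]; exact hb _

lemma binary_prepend {a : ℤ} {s : ℕ → ℤ} (ha : a = 0 ∨ a = 1) (hs : IsBinary s) (l : ℕ) :
    IsBinary (Prepend a l s) := by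
  intro i; unfold Prepend; split
  · exact ha
  · exact hs _

lemma floor_sub_floor01 {θ : ℝ} (h0 : 0 < θ) (h1 : θ < 1) (x : ℝ) :
    ⌊x+θ⌋ - ⌊x⌋ = 0 ∨ ⌊x+θ⌋ - ⌊x⌋ = 1 := by
  have hA : ⌊x⌋ ≤ ⌊x+θ⌋ := Int.floor_mono (by linarith)
  have hB : ⌊x+θ⌋ ≤ ⌊x⌋ + 1 := by
    have : ⌊x+θ⌋ ≤ ⌊x+1⌋ := Int.floor_mono (by linarith)
    rw [show x + 1 = x + (1:ℤ) by push_cast; ring, Int.floor_add_intCast] at this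
    exact this
  omega

lemma binary_charWord {θ : ℝ} (h0 : 0 < θ) (h1 : θ < 1) : IsBinary (charWord θ) := by
  intro n
  unfold charWord
  have : ((n:ℝ)+1)*θ = (n:ℝ)*θ + θ := by ring
  rw [this]
  exact floor_sub_floor01 h0 h1 _

end Part1
section Part2

lemma floor_add_bounds (x b : ℝ) : ⌊x⌋ + ⌊b⌋ ≤ ⌊x + b⌋ ∧ ⌊x + b⌋ ≤ ⌊x⌋ + ⌊b⌋ + 1 := by
  constructor
  · have : ((⌊x⌋ + ⌊b⌋ : ℤ) : ℝ) ≤ x + b := by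
      push_cast
      have := Int.floor_le x; have := Int.floor_le b; linarith
    exact Int.le_floor.2 this
  · have hx := Int.lt_floor_add_one x
    have hb := Int.lt_floor_add_one b
    have : x + b < ((⌊x⌋ + ⌊b⌋ + 1 + 1 : ℤ) : ℝ) := by push_cast; linarith
    have := Int.floor_lt.2 this
    omega

lemma ceil_add_bounds (x b : ℝ) : ⌊x⌋ + ⌈b⌉ ≤ ⌈x + b⌉ ∧ ⌈x + b⌉ ≤ ⌊x⌋ + ⌈b⌉ + 1 := by
  constructor
  · have h1 : b + (⌊x⌋ : ℝ) ≤ x + b := by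
      have := Int.floor_le x; linarith
    have := Int.ceil_mono h1
    rw [Int.ceil_add_intCast] at this
    omega
  · have h1 : x + b ≤ b + ((⌊x⌋ + 1 : ℤ) : ℝ) := by
      have := Int.lt_floor_add_one x; push_cast; linarith
    have := Int.ceil_mono h1
    rw [Int.ceil_add_intCast] at this
    omega

/-- Window sums for floor-Sturmian words. -/
lemma wnd_floor {θ ρ : ℝ} {w : ℕ → ℤ}
    (hw : ∀ n : ℕ, 1 ≤ n → w n = ⌊((n:ℝ)+1)*θ+ρ⌋ - ⌊(n:ℝ)*θ+ρ⌋) (k n : ℕ) :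
    Wnd w k n = ⌊(n:ℝ)*θ + (((k:ℝ)+1)*θ+ρ)⌋ - ⌊((k:ℝ)+1)*θ+ρ⌋ := by
  induction n with
  | zero => simp [Wnd_zero]
  | succ n ih =>
      rw [Wnd_succ, ih, hw (k+(n+1)) (by omega)]
      have e1 : ((((k:ℕ)+(n+1)):ℕ):ℝ) = (k:ℝ)+(n:ℝ)+1 := by push_cast; ring
      rw [e1]
      have e2 : ((k:ℝ)+(n:ℝ)+1+1)*θ+ρ = ((n:ℝ)+1)*θ + (((k:ℝ)+1)*θ+ρ) := by ring
      have e3 : ((k:ℝ)+(n:ℝ)+1)*θ+ρ = (n:ℝ)*θ + (((k:ℝ)+1)*θ+ρ) := by ring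
      rw [e2, e3]
      push_cast
      ring

/-- Window sums for ceiling-Sturmian words. -/
lemma wnd_ceil {θ ρ : ℝ} {w : ℕ → ℤ}
    (hw : ∀ n : ℕ, 1 ≤ n → w n = ⌈((n:ℝ)+1)*θ+ρ⌉ - ⌈(n:ℝ)*θ+ρ⌉) (k n : ℕ) :
    Wnd w k n = ⌈(n:ℝ)*θ + (((k:ℝ)+1)*θ+ρ)⌉ - ⌈((k:ℝ)+1)*θ+ρ⌉ := by
  induction n with
  | zero => simp [Wnd_zero]
  | succ n ih =>
      rw [Wnd_succ, ih, hw (k+(n+1)) (by omega)]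
      have e1 : ((((k:ℕ)+(n+1)):ℕ):ℝ) = (k:ℝ)+(n:ℝ)+1 := by push_cast; ring
      rw [e1]
      have e2 : ((k:ℝ)+(n:ℝ)+1+1)*θ+ρ = ((n:ℝ)+1)*θ + (((k:ℝ)+1)*θ+ρ) := by ring
      have e3 : ((k:ℝ)+(n:ℝ)+1)*θ+ρ = (n:ℝ)*θ + (((k:ℝ)+1)*θ+ρ) := by ring
      rw [e2, e3]
      push_cast
      ring

/-- Any window of a Sturmian word lies in [⌊nθ⌋, ⌊nθ⌋+1]. -/
lemma sturmian_wnd_bounds {θ : ℝ} {w : ℕ → ℤ} (hs : IsSturmian θ w) (k n : ℕ) :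
    ⌊(n:ℝ)*θ⌋ ≤ Wnd w k n ∧ Wnd w k n ≤ ⌊(n:ℝ)*θ⌋ + 1 := by
  obtain ⟨hirr, hio, ρ, hw | hw⟩ := hs
  · rw [wnd_floor hw]
    have h1 := floor_add_bounds ((n:ℝ)*θ) (((k:ℝ)+1)*θ+ρ)
    omega
  · rw [wnd_ceil hw]
    have h1 := ceil_add_bounds ((n:ℝ)*θ) (((k:ℝ)+1)*θ+ρ)
    omega

/-- Partial sums of 0·(charWord θ). -/
lemma wnd_prepend0_charWord {θ : ℝ} (h0 : 0 ≤ θ) (h1 : θ < 1) (n : ℕ) :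
    Wnd (Prepend 0 1 (charWord θ)) 0 n = ⌊(n:ℝ)*θ⌋ := by
  induction n with
  | zero => simp [Wnd_zero]
  | succ n ih =>
      rw [Wnd_succ, ih]
      rcases Nat.eq_zero_or_pos n with rfl | hn
      · have : Prepend 0 1 (charWord θ) (0+(0+1)) = 0 := by
          unfold Prepend; norm_num
        rw [this]
        have : ⌊θ⌋ = 0 := Int.floor_eq_zero_iff.2 ⟨h0, h1⟩
        simp [this]
      · have hval : Prepend 0 1 (charWord θ) (0+(n+1)) = charWord θ n := by
          unfold Prepend
          have : ¬ (0+(n+1) ≤ 1) := by omega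
          rw [if_neg this]
          congr 1
          omega
        rw [hval]
        unfold charWord
        have : ((n:ℝ)+1)*θ = ((n+1:ℕ):ℝ)*θ := by push_cast; ring
        rw [this]
        ring

/-- Partial sums of 1·(charWord θ). -/
lemma wnd_prepend1_charWord {θ : ℝ} (h0 : 0 ≤ θ) (h1 : θ < 1) (n : ℕ) (hn : 1 ≤ n) :
    Wnd (Prepend 1 1 (charWord θ)) 0 n = ⌊(n:ℝ)*θ⌋ + 1 := by
  induction n with
  | zero => omega
  | succ n ih =>
      rw [Wnd_succ]
      rcases Nat.eq_zero_or_pos n with rfl | hn'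
      · have : Prepend 1 1 (charWord θ) (0+(0+1)) = 1 := by
          unfold Prepend; norm_num
        rw [this]
        have h2 : ⌊θ⌋ = 0 := Int.floor_eq_zero_iff.2 ⟨h0, h1⟩
        simp [Wnd_zero, h2]
      · rw [ih hn']
        have hval : Prepend 1 1 (charWord θ) (0+(n+1)) = charWord θ n := by
          unfold Prepend
          have : ¬ (0+(n+1) ≤ 1) := by omega
          rw [if_neg this]
          congr 1
          omega
        rw [hval]
        unfold charWord
        have : ((n:ℝ)+1)*θ = ((n+1:ℕ):ℝ)*θ := by push_cast; ring
        rw [this]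
        ring

/-- The central bounding result for Sturmian words. -/
lemma sturmian_lex_bounds {θ : ℝ} {w : ℕ → ℤ} (hs : IsSturmian θ w) (n : ℕ) :
    LexLe (Prepend 0 1 (charWord θ)) (Shf^[n] w) ∧
    LexLe (Shf^[n] w) (Prepend 1 1 (charWord θ)) := by
  have hio := hs.2.1
  have hwnd : ∀ m : ℕ, Wnd (Shf^[n] w) 0 m = Wnd w n m := by
    intro m
    apply Wnd_congr
    intro i _ _
    rw [shf_iter]
    congr 1
    omega
  constructor
  · apply lexle_of_sums
    intro m _
    rw [hwnd m, wnd_prepend0_charWord hio.1.le hio.2]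
    exact (sturmian_wnd_bounds hs n m).1
  · apply lexle_of_sums
    intro m hm
    rw [hwnd m, wnd_prepend1_charWord hio.1.le hio.2 m hm]
    exact (sturmian_wnd_bounds hs n m).2

end Part2
section Part3

lemma fract_irrational_pos {x : ℝ} (h : Irrational x) : 0 < Int.fract x := by
  rcases lt_or_eq_of_le (Int.fract_nonneg x) with h' | h'
  · exact h'
  · exfalso
    have h2 := Int.fract_add_floor x
    rw [← h'] at h2
    exact h.ne_int ⌊x⌋ (by linarith)

/-- A positive natural multiple of an irrational with small positive fract. -/
lemma exists_fract_small {θ : ℝ} (hirr : Irrational θ) {ε : ℝ} (hε : 0 < ε) :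
    ∃ q : ℕ, 1 ≤ q ∧ 0 < Int.fract ((q:ℝ)*θ) ∧ Int.fract ((q:ℝ)*θ) < ε := by
  obtain ⟨n, hn⟩ := exists_nat_gt (1/ε)
  have hn0 : 0 < n := by
    have : 0 < 1/ε := by positivity
    by_contra h
    push_neg at h
    interval_cases n
    simp at hn
    linarith
  obtain ⟨q, hq0, _, hq⟩ := Real.exists_nat_abs_mul_sub_round_le θ hn0
  set x := (q:ℝ)*θ with hx
  have hqirr : Irrational x := hirr.natCast_mul (by omega)
  have hlt : |x - round x| < ε := by
    have h1 : (1:ℝ)/(n+1) < ε := by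
      rw [div_lt_iff₀ (by positivity)]
      rw [div_lt_iff₀ hε] at hn
      nlinarith
    linarith
  have hne : x ≠ (round x : ℝ) := hqirr.ne_int (round x)
  have habs := abs_sub_round x
  rcases lt_or_gt_of_ne hne with hc | hc
  · -- fract x ∈ (1-ε, 1); multiply up
    have hc' : (round x : ℝ) - x < ε := by
      have := abs_of_neg (sub_neg.2 hc) ▸ hlt
      linarith [neg_sub x (round x : ℝ)]
    have hf : Int.fract x = x - (round x : ℝ) + 1 := by
      rw [Int.fract_eq_iff]
      refine ⟨?_, ?_, ⟨round x - 1, by push_cast; ring⟩⟩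
      · have : (round x : ℝ) - x ≤ 1/2 := by
          calc (round x : ℝ) - x ≤ |x - round x| := by
                rw [abs_sub_comm]; exact le_abs_self _
            _ ≤ 1/2 := habs
        linarith
      · linarith [sub_neg.2 hc]
    set γ := 1 - Int.fract x with hγdef
    have hγpos : 0 < γ := by
      have := Int.fract_lt_one x
      simp only [hγdef]
      linarith
    have hγε : γ < ε := by
      simp only [hγdef, hf]
      linarith
    have hγirr : Irrational γ := by
      have h1 : Irrational (Int.fract x) := by
        unfold Int.fract
        exact hqirr.sub_intCast ⌊x⌋
      have h2 : Irrational (-Int.fract x) := h1.neg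
      simpa [hγdef, sub_eq_add_neg] using h2.intCast_add 1
    -- j = ⌊1/γ⌋
    have hγ1 : 1 < 1/γ := by
      rw [lt_div_iff₀ hγpos]
      have := Int.fract_lt_one x
      have : γ < 1 := by
        simp only [hγdef]
        have := fract_irrational_pos hqirr
        linarith
      linarith
    set j : ℤ := ⌊1/γ⌋ with hjdef
    have hj1 : 1 ≤ j := by
      have : (1:ℤ) ≤ ⌊1/γ⌋ := by
        rw [Int.le_floor]; push_cast; linarith
      exact this
    have hjlt : (j:ℝ) < 1/γ := by
      rcases lt_or_eq_of_le (Int.floor_le (1/γ)) with h' | h'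
      · exact h'
      · exfalso
        apply hγirr
        refine ⟨(j:ℚ)⁻¹, ?_⟩
        push_cast
        rw [show ((j:ℤ):ℝ) = 1/γ from h']
        simp
    have hjγlt : (j:ℝ)*γ < 1 := by
      rw [← lt_div_iff₀ hγpos]; exact hjlt
    have hjγge : 1 - γ < (j:ℝ)*γ := by
      have : 1/γ < (j:ℝ) + 1 := Int.lt_floor_add_one (1/γ)
      have h2 : 1 < ((j:ℝ)+1)*γ := by
        rw [← div_lt_iff₀ hγpos]
        exact this
      nlinarith
    refine ⟨j.toNat * q, ?_, ?_, ?_⟩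
    · have : 0 < j.toNat := by omega
      have : 1 ≤ q := by omega
      exact Nat.one_le_iff_ne_zero.2 (by positivity)
    all_goals {
      have hjj : ((j.toNat:ℕ):ℝ) = (j:ℝ) := by
        rw [← Int.cast_natCast, Int.toNat_of_nonneg (by omega : (0:ℤ) ≤ j)]
      have hjγpos : 0 < (j:ℝ)*γ := by
        apply mul_pos _ hγpos
        have : (1:ℝ) ≤ (j:ℝ) := by exact_mod_cast hj1
        linarith
      have hcast : ((j.toNat * q : ℕ):ℝ) * θ = (j:ℝ) * x := by
        rw [hx]
        push_cast
        rw [hjj]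
        ring
      have hfr : Int.fract (((j.toNat * q : ℕ):ℝ) * θ) = 1 - (j:ℝ)*γ := by
        rw [hcast, Int.fract_eq_iff]
        refine ⟨by linarith, by linarith, ⟨j * ⌊x⌋ + j - 1, ?_⟩⟩
        push_cast
        rw [show ((⌊x⌋:ℤ):ℝ) = x - Int.fract x from (Int.self_sub_fract x).symm]
        simp only [hγdef]
        ring
      rw [hfr]
      first
        | linarith
        | linarith
    }
  · -- fract x = x - round x ∈ (0, ε)
    have hc' : x - (round x : ℝ) < ε := by
      have := abs_of_pos (sub_pos.2 hc) ▸ hlt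
      linarith
    have hf : Int.fract x = x - (round x : ℝ) := by
      rw [Int.fract_eq_iff]
      refine ⟨by linarith [sub_pos.2 hc], ?_, ⟨round x, by ring⟩⟩
      have : x - (round x : ℝ) ≤ 1/2 := le_trans (le_abs_self _) habs
      linarith
    exact ⟨q, by omega, by rw [hf]; linarith [sub_pos.2 hc], by rw [hf]; linarith⟩

/-- Orbit of an irrational rotation enters any subinterval of [0,1]. -/
lemma exists_fract_mem {θ : ℝ} (hirr : Irrational θ) (x₀ : ℝ) {a b : ℝ}
    (ha : 0 ≤ a) (hab : a < b) (hb : b ≤ 1) :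
    ∃ k : ℕ, a < Int.fract (x₀ + (k:ℝ)*θ) ∧ Int.fract (x₀ + (k:ℝ)*θ) < b := by
  set c := (a+b)/2 with hc
  have hca : a < c := by rw [hc]; linarith
  have hcb : c < b := by rw [hc]; linarith
  obtain ⟨q, hq1, hδ0, hδε⟩ := exists_fract_small hirr (show (0:ℝ) < (b-a)/2 by linarith)
  set δ := Int.fract ((q:ℝ)*θ) with hδdef
  -- choose integer m ≥ x₀ - c, then j = ⌈(c + m - x₀)/δ⌉
  obtain ⟨m, hm⟩ := exists_nat_gt (x₀ - c)
  set j : ℤ := ⌈(c + m - x₀)/δ⌉ with hjdef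
  have hj0 : 0 ≤ j := by
    rw [hjdef]
    apply Int.ceil_nonneg
    apply div_nonneg _ hδ0.le
    linarith
  have hjge : c + m - x₀ ≤ (j:ℝ) * δ := by
    rw [← div_le_iff₀ hδ0]
    exact Int.le_ceil _
  have hjlt : (j:ℝ) * δ < c + m - x₀ + δ := by
    have := Int.ceil_lt_add_one ((c + m - x₀)/δ)
    calc (j:ℝ) * δ < ((c + m - x₀)/δ + 1) * δ := by
          apply mul_lt_mul_of_pos_right _ hδ0
          exact this
      _ = c + m - x₀ + δ := by field_simp
  refine ⟨j.toNat * q, ?_, ?_⟩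
  all_goals {
    have hjj : ((j.toNat:ℕ):ℝ) = (j:ℝ) := by
      rw [← Int.cast_natCast, Int.toNat_of_nonneg hj0]
    have hqθ : (q:ℝ)*θ = δ + (⌊(q:ℝ)*θ⌋:ℝ) := by
      rw [hδdef, add_comm]
      exact (Int.floor_add_fract _).symm
    have hcast : x₀ + ((j.toNat * q : ℕ):ℝ) * θ = (x₀ + (j:ℝ)*δ) + (j * ⌊(q:ℝ)*θ⌋ : ℤ) := by
      push_cast
      conv_lhs => rw [hjj, mul_assoc, hqθ]
      ring
    have hval : Int.fract (x₀ + ((j.toNat * q : ℕ):ℝ) * θ) = x₀ + (j:ℝ)*δ - m := by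
      rw [hcast, Int.fract_add_intCast, Int.fract_eq_iff]
      refine ⟨by linarith, by linarith, ⟨m, by push_cast; ring⟩⟩
    rw [hval]
    first
      | linarith
      | linarith
  }

end Part3
section Part4

lemma floor_add_small {t y : ℝ} (h0 : 0 ≤ y) (h1 : y < 1 - Int.fract t) : ⌊t + y⌋ = ⌊t⌋ := by
  have hf : Int.fract t = t - ⌊t⌋ := rfl
  rw [Int.floor_eq_iff]
  constructor
  · have := Int.floor_le t; linarith
  · push_cast; rw [hf] at h1; linarith

lemma floor_add_big {t y : ℝ} (h1 : 1 - Int.fract t ≤ y) (h2 : y < 1) : ⌊t + y⌋ = ⌊t⌋ + 1 := by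
  have hf : Int.fract t = t - ⌊t⌋ := rfl
  rw [Int.floor_eq_iff]
  rw [hf] at h1
  constructor
  · push_cast; linarith
  · push_cast; linarith [Int.lt_floor_add_one t]

lemma ceil_add_small {t y : ℝ} (h0 : 0 < y) (h1 : y ≤ 1 - Int.fract t) : ⌈t + y⌉ = ⌊t⌋ + 1 := by
  have hf : Int.fract t = t - ⌊t⌋ := rfl
  rw [Int.ceil_eq_iff]
  rw [hf] at h1
  constructor
  · push_cast; linarith [Int.floor_le t]
  · push_cast; linarith

lemma ceil_add_big {t y : ℝ} (h1 : 1 - Int.fract t < y) (h2 : y ≤ 1) : ⌈t + y⌉ = ⌊t⌋ + 2 := by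
  have hf : Int.fract t = t - ⌊t⌋ := rfl
  rw [Int.ceil_eq_iff]
  rw [hf] at h1
  have := Int.fract_lt_one t
  rw [hf] at this
  constructor
  · push_cast; linarith
  · push_cast; linarith

/-- A uniform positive margin for the fractional parts of the first m multiples. -/
lemma exists_eps {θ : ℝ} (hirr : Irrational θ) (m : ℕ) :
    ∃ ε : ℝ, 0 < ε ∧ ε ≤ 1 ∧ ∀ j : ℕ, 1 ≤ j → j ≤ m →
      ε ≤ 1 - Int.fract ((j:ℝ)*θ) ∧ ε ≤ Int.fract ((j:ℝ)*θ) := by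
  induction m with
  | zero => exact ⟨1, by norm_num, le_refl 1, by omega⟩
  | succ m ih =>
      obtain ⟨ε, hε0, hε1, hεj⟩ := ih
      have hjirr : Irrational (((m+1:ℕ):ℝ)*θ) := hirr.natCast_mul (by omega)
      have hfr0 : 0 < Int.fract (((m+1:ℕ):ℝ)*θ) := fract_irrational_pos hjirr
      have hfr1 : Int.fract (((m+1:ℕ):ℝ)*θ) < 1 := Int.fract_lt_one _
      refine ⟨min ε (min (1 - Int.fract (((m+1:ℕ):ℝ)*θ)) (Int.fract (((m+1:ℕ):ℝ)*θ))),
        ?_, ?_, ?_⟩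
      · apply lt_min hε0
        apply lt_min (by linarith) hfr0
      · exact le_trans (min_le_left _ _) hε1
      · intro j hj1 hj2
        rcases Nat.lt_or_ge j (m+1) with hlt | hge
        · have := hεj j hj1 (by omega)
          constructor
          · exact le_trans (min_le_left _ _) this.1
          · exact le_trans (min_le_left _ _) this.2
        · have hj : j = m+1 := by omega
          subst hj
          constructor
          · exact le_trans (min_le_right _ _) (min_le_left _ _)
          · exact le_trans (min_le_right _ _) (min_le_right _ _)

/-- Realization of prefixes of 0·c_θ in the orbit of a Sturmian word. -/
lemma prefix_realize0 {θ : ℝ} {w : ℕ → ℤ} (hs : IsSturmian θ w) (m : ℕ) :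
    ∃ k : ℕ, ∀ i, 1 ≤ i → i ≤ m → w (k+i) = Prepend 0 1 (charWord θ) i := by
  obtain ⟨hirr, ⟨h0, h1⟩, ρ, hw⟩ := hs
  obtain ⟨ε, hε0, hε1, hεj⟩ := exists_eps hirr m
  obtain ⟨k, hy1, hy2⟩ := exists_fract_mem hirr (θ + ρ) (le_refl 0) hε0 hε1
  set y := Int.fract (θ + ρ + (k:ℝ)*θ) with hydef
  set M := ⌊θ + ρ + (k:ℝ)*θ⌋ with hMdef
  have hze : (M:ℝ) + y = θ + ρ + (k:ℝ)*θ := Int.floor_add_fract _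
  have key : ∀ i' : ℕ, (((k+(i'+1)):ℕ):ℝ)*θ + ρ = ((i':ℝ)*θ + y) + (M:ℝ) := by
    intro i'
    push_cast
    linear_combination -hze
  have hy01 : 0 < y ∧ y < 1 := ⟨hy1, Int.fract_lt_one _⟩
  refine ⟨k, ?_⟩
  intro i hi1 him
  obtain ⟨i', rfl⟩ : ∃ i', i = i' + 1 := ⟨i - 1, by omega⟩
  -- the two floor/ceil identities
  have hyS : ∀ j : ℕ, j ≤ m → ⌊(j:ℝ)*θ + y⌋ = ⌊(j:ℝ)*θ⌋ := by
    intro j hj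
    apply floor_add_small hy01.1.le
    rcases Nat.eq_zero_or_pos j with rfl | hjpos
    · simp
      linarith [hy2, hε1]
    · exact lt_of_lt_of_le hy2 (hεj j hjpos hj).1
  have hyC : ∀ j : ℕ, j ≤ m → ⌈(j:ℝ)*θ + y⌉ = ⌊(j:ℝ)*θ⌋ + 1 := by
    intro j hj
    apply ceil_add_small hy01.1
    rcases Nat.eq_zero_or_pos j with rfl | hjpos
    · simp
      linarith [hy2, hε1]
    · exact le_trans hy2.le (hεj j hjpos hj).1
  have e1 : ((((k+(i'+1)):ℕ)):ℝ)*θ + ρ = ((i':ℝ)*θ + y) + (M:ℝ) := key i'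
  have e2 : (((((k+(i'+1)):ℕ)):ℝ)+1)*θ + ρ = ((((i'+1:ℕ)):ℝ)*θ + y) + (M:ℝ) := by
    have := key (i'+1)
    push_cast at this ⊢
    linear_combination this
  have hval : w (k+(i'+1)) = ⌊(((i'+1:ℕ)):ℝ)*θ⌋ - ⌊((i'):ℝ)*θ⌋ := by
    rcases hw with hw | hw
    · rw [hw (k+(i'+1)) (by omega), e1, e2, Int.floor_add_intCast, Int.floor_add_intCast,
        hyS (i'+1) (by omega), hyS i' (by omega)]
      ring
    · rw [hw (k+(i'+1)) (by omega), e1, e2, Int.ceil_add_intCast, Int.ceil_add_intCast,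
        hyC (i'+1) (by omega), hyC i' (by omega)]
      ring
  rw [hval]
  unfold Prepend
  rcases Nat.eq_zero_or_pos i' with rfl | hi'pos
  · rw [if_pos (by omega)]
    have : ⌊θ⌋ = 0 := Int.floor_eq_zero_iff.2 ⟨h0.le, h1⟩
    push_cast
    simp [this]
  · rw [if_neg (by omega)]
    unfold charWord
    have : ((i'+1) - 1 : ℕ) = i' := by omega
    rw [this]
    push_cast
    ring_nf

/-- Realization of prefixes of 1·c_θ in the orbit of a Sturmian word. -/
lemma prefix_realize1 {θ : ℝ} {w : ℕ → ℤ} (hs : IsSturmian θ w) (m : ℕ) :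
    ∃ k : ℕ, ∀ i, 1 ≤ i → i ≤ m → w (k+i) = Prepend 1 1 (charWord θ) i := by
  obtain ⟨hirr, ⟨h0, h1⟩, ρ, hw⟩ := hs
  obtain ⟨ε, hε0, hε1, hεj⟩ := exists_eps hirr m
  obtain ⟨k, hy1, hy2⟩ := exists_fract_mem hirr (θ + ρ) (a := 1 - ε) (b := 1)
    (by linarith) (by linarith) (le_refl 1)
  set y := Int.fract (θ + ρ + (k:ℝ)*θ) with hydef
  set M := ⌊θ + ρ + (k:ℝ)*θ⌋ with hMdef
  have hze : (M:ℝ) + y = θ + ρ + (k:ℝ)*θ := Int.floor_add_fract _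
  have key : ∀ i' : ℕ, (((k+(i'+1)):ℕ):ℝ)*θ + ρ = ((i':ℝ)*θ + y) + (M:ℝ) := by
    intro i'
    push_cast
    linear_combination -hze
  have hy0 : 0 < y := by linarith
  have hylt : y < 1 := Int.fract_lt_one _
  refine ⟨k, ?_⟩
  intro i hi1 him
  obtain ⟨i', rfl⟩ : ∃ i', i = i' + 1 := ⟨i - 1, by omega⟩
  have hyS : ∀ j : ℕ, 1 ≤ j → j ≤ m → ⌊(j:ℝ)*θ + y⌋ = ⌊(j:ℝ)*θ⌋ + 1 := by
    intro j hj1 hj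
    apply floor_add_big _ hylt
    have := (hεj j hj1 hj).2
    linarith
  have hyC : ∀ j : ℕ, 1 ≤ j → j ≤ m → ⌈(j:ℝ)*θ + y⌉ = ⌊(j:ℝ)*θ⌋ + 2 := by
    intro j hj1 hj
    apply ceil_add_big _ hylt.le
    have := (hεj j hj1 hj).2
    linarith
  have e1 : ((((k+(i'+1)):ℕ)):ℝ)*θ + ρ = ((i':ℝ)*θ + y) + (M:ℝ) := key i'
  have e2 : (((((k+(i'+1)):ℕ)):ℝ)+1)*θ + ρ = ((((i'+1:ℕ)):ℝ)*θ + y) + (M:ℝ) := by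
    have := key (i'+1)
    push_cast at this ⊢
    linear_combination this
  rcases Nat.eq_zero_or_pos i' with rfl | hi'pos
  · -- first letter is 1
    have hval : w (k+(0+1)) = 1 := by
      rcases hw with hw | hw
      · rw [hw (k+(0+1)) (by omega), e1, e2, Int.floor_add_intCast, Int.floor_add_intCast]
        have hA : ⌊(((0+1:ℕ)):ℝ)*θ + y⌋ = ⌊(((0+1:ℕ)):ℝ)*θ⌋ + 1 := hyS 1 le_rfl (by omega)
        have hB : ⌊((0:ℕ):ℝ)*θ + y⌋ = 0 := by
          push_cast
          rw [zero_mul, zero_add]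
          exact Int.floor_eq_zero_iff.2 ⟨hy0.le, hylt⟩
        push_cast at hA hB ⊢
        rw [hA, hB]
        have : ⌊(1:ℝ)*θ⌋ = 0 := by
          rw [one_mul]
          exact Int.floor_eq_zero_iff.2 ⟨h0.le, h1⟩
        rw [this]
        ring
      · rw [hw (k+(0+1)) (by omega), e1, e2, Int.ceil_add_intCast, Int.ceil_add_intCast]
        have hA : ⌈(((0+1:ℕ)):ℝ)*θ + y⌉ = ⌊(((0+1:ℕ)):ℝ)*θ⌋ + 2 := hyC 1 le_rfl (by omega)
        have hB : ⌈((0:ℕ):ℝ)*θ + y⌉ = 1 := by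
          push_cast
          rw [zero_mul, zero_add]
          rw [Int.ceil_eq_iff]
          constructor
          · push_cast; linarith
          · push_cast; linarith
        push_cast at hA hB ⊢
        rw [hA, hB]
        have : ⌊(1:ℝ)*θ⌋ = 0 := by
          rw [one_mul]
          exact Int.floor_eq_zero_iff.2 ⟨h0.le, h1⟩
        rw [this]
        ring
    rw [hval]
    unfold Prepend
    rw [if_pos (by omega)]
  · -- letters beyond the first
    have hval : w (k+(i'+1)) = ⌊(((i'+1:ℕ)):ℝ)*θ⌋ - ⌊((i'):ℝ)*θ⌋ := by
      rcases hw with hw | hw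
      · rw [hw (k+(i'+1)) (by omega), e1, e2, Int.floor_add_intCast, Int.floor_add_intCast,
          hyS (i'+1) (by omega) (by omega), hyS i' (by omega) (by omega)]
        ring
      · rw [hw (k+(i'+1)) (by omega), e1, e2, Int.ceil_add_intCast, Int.ceil_add_intCast,
          hyC (i'+1) (by omega) (by omega), hyC i' (by omega) (by omega)]
        ring
    rw [hval]
    unfold Prepend
    rw [if_neg (by omega)]
    unfold charWord
    have : ((i'+1) - 1 : ℕ) = i' := by omega
    rw [this]
    push_cast
    ring_nf

end Part4
section Part5

lemma prepend_val1 (a : ℤ) (s : ℕ → ℤ) : Prepend a 1 s 1 = a := by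
  unfold Prepend; norm_num

lemma prepend_val (a : ℤ) (s : ℕ → ℤ) (i : ℕ) (hi : 2 ≤ i) : Prepend a 1 s i = s (i-1) := by
  unfold Prepend; rw [if_neg (by omega)]

/-- Any binary word u bounding the orbit must be the characteristic word. -/
lemma char_unique {θ : ℝ} {w : ℕ → ℤ} (hs : IsSturmian θ w) (u : ℕ → ℤ) (hu : IsBinary u)
    (hbd : ∀ n : ℕ, LexLe (Prepend 0 1 u) (Shf^[n] w) ∧ LexLe (Shf^[n] w) (Prepend 1 1 u)) :
    EqW u (charWord θ) := by
  have hio := hs.2.1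
  have hbc : IsBinary (charWord θ) := binary_charWord hio.1 hio.2
  by_contra hne
  obtain ⟨m, hm1, hagr, hneq⟩ := firstDiff hne
  rcases hu m with hu0 | hu1 <;> rcases hbc m with hc0 | hc1
  · exact hneq (by rw [hu0, hc0])
  · -- u m = 0, charWord m = 1 : use prefix_realize1 and the upper bound
    obtain ⟨k, hk⟩ := prefix_realize1 hs (m+1)
    have hB : ∀ i, Shf^[k] w i = w (k+i) := by
      intro i; rw [shf_iter]; congr 1; omega
    apply not_lexle_of (A := Shf^[k] w) (B := Prepend 1 1 u) (m := m+1) (by omega) ?_ ?_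
      (hbd k).2
    · intro i hi1 hilt
      rw [hB i, hk i hi1 (by omega)]
      rcases Nat.lt_or_ge i 2 with h2 | h2
      · have : i = 1 := by omega
        subst this
        rw [prepend_val1, prepend_val1]
      · rw [prepend_val _ _ i h2, prepend_val _ _ i h2]
        exact (hagr (i-1) (by omega) (by omega)).symm
    · rw [hB (m+1), hk (m+1) (by omega) (by omega), prepend_val _ _ (m+1) (by omega),
        prepend_val _ _ (m+1) (by omega)]
      simp only [Nat.add_sub_cancel]
      omega
  · -- u m = 1, charWord m = 0 : use prefix_realize0 and the lower bound
    obtain ⟨k, hk⟩ := prefix_realize0 hs (m+1)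
    have hB : ∀ i, Shf^[k] w i = w (k+i) := by
      intro i; rw [shf_iter]; congr 1; omega
    apply not_lexle_of (A := Prepend 0 1 u) (B := Shf^[k] w) (m := m+1) (by omega) ?_ ?_
      (hbd k).1
    · intro i hi1 hilt
      rw [hB i, hk i hi1 (by omega)]
      rcases Nat.lt_or_ge i 2 with h2 | h2
      · have : i = 1 := by omega
        subst this
        rw [prepend_val1, prepend_val1]
      · rw [prepend_val _ _ i h2, prepend_val _ _ i h2]
        exact hagr (i-1) (by omega) (by omega)
    · rw [hB (m+1), hk (m+1) (by omega) (by omega), prepend_val _ _ (m+1) (by omega),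
        prepend_val _ _ (m+1) (by omega)]
      simp only [Nat.add_sub_cancel]
      omega
  · exact hneq (by rw [hu1, hc1])

/-- 0·c_θ is the greatest lower bound of the orbit. -/
lemma inf_extremal {θ : ℝ} {w : ℕ → ℤ} (hs : IsSturmian θ w) (v : ℕ → ℤ) (hv : IsBinary v)
    (hvb : ∀ n : ℕ, LexLe v (Shf^[n] w)) : LexLe v (Prepend 0 1 (charWord θ)) := by
  have hio := hs.2.1
  have hbc : IsBinary (Prepend 0 1 (charWord θ)) :=
    binary_prepend (Or.inl rfl) (binary_charWord hio.1 hio.2) 1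
  by_cases hne : EqW v (Prepend 0 1 (charWord θ))
  · exact Or.inr hne
  obtain ⟨m, hm1, hagr, hneq⟩ := firstDiff hne
  rcases hv m with hv0 | hv1 <;> rcases hbc m with hc0 | hc1
  · exact absurd (by rw [hv0, hc0]) hneq
  · exact Or.inl ⟨m, hm1, hagr, by omega⟩
  · -- v m = 1, P0 m = 0 : contradiction with some orbit element
    exfalso
    obtain ⟨k, hk⟩ := prefix_realize0 hs m
    have hB : ∀ i, Shf^[k] w i = w (k+i) := by
      intro i; rw [shf_iter]; congr 1; omega
    apply not_lexle_of (A := v) (B := Shf^[k] w) (m := m) hm1 ?_ ?_ (hvb k)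
    · intro i hi1 hilt
      rw [hB i, hk i hi1 (by omega)]
      exact hagr i hi1 hilt
    · rw [hB m, hk m hm1 le_rfl]
      omega
  · exact absurd (by rw [hv1, hc1]) hneq

/-- 1·c_θ is the least upper bound of the orbit. -/
lemma sup_extremal {θ : ℝ} {w : ℕ → ℤ} (hs : IsSturmian θ w) (v : ℕ → ℤ) (hv : IsBinary v)
    (hvb : ∀ n : ℕ, LexLe (Shf^[n] w) v) : LexLe (Prepend 1 1 (charWord θ)) v := by
  have hio := hs.2.1
  have hbc : IsBinary (Prepend 1 1 (charWord θ)) :=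
    binary_prepend (Or.inr rfl) (binary_charWord hio.1 hio.2) 1
  by_cases hne : EqW (Prepend 1 1 (charWord θ)) v
  · exact Or.inr hne
  obtain ⟨m, hm1, hagr, hneq⟩ := firstDiff hne
  rcases hbc m with hc0 | hc1 <;> rcases hv m with hv0 | hv1
  · exact absurd (by rw [hv0, hc0]) hneq
  · exact Or.inl ⟨m, hm1, hagr, by omega⟩
  · -- P1 m = 1, v m = 0 : contradiction
    exfalso
    obtain ⟨k, hk⟩ := prefix_realize1 hs m
    have hB : ∀ i, Shf^[k] w i = w (k+i) := by
      intro i; rw [shf_iter]; congr 1; omega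
    apply not_lexle_of (A := Shf^[k] w) (B := v) (m := m) hm1 ?_ ?_ (hvb k)
    · intro i hi1 hilt
      rw [hB i, hk i hi1 (by omega)]
      exact (hagr i hi1 hilt)
    · rw [hB m, hk m hm1 le_rfl]
      omega
  · exact absurd (by rw [hv1, hc1]) hneq

end Part5
section Part6

lemma Wnd_one (w : ℕ → ℤ) (k : ℕ) : Wnd w k 1 = w (k+1) := by
  unfold Wnd
  simp

lemma Wnd_decomp {w : ℕ → ℤ} (k n : ℕ) (hn : 2 ≤ n) :
    Wnd w k n = w (k+1) + Wnd w (k+1) (n-2) + w (k+n) := by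
  have h1 : n = (1 + (n-2)) + 1 := by omega
  conv_lhs => rw [h1]
  rw [Wnd_succ, Wnd_split, Wnd_one]
  have e : k + (1 + (n-2) + 1) = k + n := by omega
  rw [e]

lemma lexle_forces {A uu : ℕ → ℤ} (h : LexLe A uu) (i : ℕ) (hi : 1 ≤ i)
    (hagree : ∀ p, 1 ≤ p → p < i → uu p = A p) : A i ≤ uu i := by
  rcases h with ⟨p, hp1, hpag, hplt⟩ | heq
  · rcases lt_trichotomy p i with hc | hc | hc
    · have := hagree p hp1 hc; omega
    · subst hc; omega
    · have := hpag i hi hc; omega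
  · have := heq i hi; omega

lemma lexle_congr {A A' B B' : ℕ → ℤ} (hA : ∀ i, 1 ≤ i → A i = A' i)
    (hB : ∀ i, 1 ≤ i → B i = B' i) (h : LexLe A B) : LexLe A' B' := by
  rcases h with ⟨n, hn1, hagr, hlt⟩ | heq
  · left
    refine ⟨n, hn1, ?_, ?_⟩
    · intro i hi hilt
      rw [← hA i hi, ← hB i hi]
      exact hagr i hi hilt
    · rw [← hA n hn1, ← hB n hn1]
      exact hlt
  · right
    intro i hi
    rw [← hA i hi, ← hB i hi]
    exact heq i hi

/-- Orbit bounded by 0u/1u forces the balance property. -/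
lemma balance {w u : ℕ → ℤ} (hb : IsBinary w) (hu : IsBinary u)
    (hbd : ∀ n : ℕ, LexLe (Prepend 0 1 u) (Shf^[n] w) ∧ LexLe (Shf^[n] w) (Prepend 1 1 u)) :
    ∀ n k j, Wnd w k n ≤ Wnd w j n + 1 := by
  classical
  by_contra hcon
  push_neg at hcon
  obtain ⟨n₁, k₁, j₁, hlt1⟩ := hcon
  have hP : ∃ n, ∃ k j : ℕ, Wnd w j n + 2 ≤ Wnd w k n := ⟨n₁, k₁, j₁, by omega⟩
  obtain ⟨k, j, hkj⟩ := Nat.find_spec hP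
  set n₀ := Nat.find hP with hn₀def
  have hmin : ∀ m, m < n₀ → ∀ k' j' : ℕ, Wnd w k' m ≤ Wnd w j' m + 1 := by
    intro m hm k' j'
    by_contra h
    exact Nat.find_min hP hm ⟨k', j', by omega⟩
  have h2 : 2 ≤ n₀ := by
    by_contra h
    push_neg at h
    interval_cases n₀
    · rw [Wnd_zero, Wnd_zero] at hkj
      omega
    · rw [Wnd_one, Wnd_one] at hkj
      rcases hb (k+1) with h' | h' <;> rcases hb (j+1) with h'' | h'' <;> omega
  -- decompositions at the first letter
  have hsplitk : Wnd w k n₀ = w (k+1) + Wnd w (k+1) (n₀-1) := by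
    have h1 : n₀ = 1 + (n₀-1) := by omega
    conv_lhs => rw [h1]
    rw [Wnd_split, Wnd_one]
  have hsplitj : Wnd w j n₀ = w (j+1) + Wnd w (j+1) (n₀-1) := by
    have h1 : n₀ = 1 + (n₀-1) := by omega
    conv_lhs => rw [h1]
    rw [Wnd_split, Wnd_one]
  have hfirst : w (k+1) = 1 ∧ w (j+1) = 0 := by
    have hm1 := hmin (n₀-1) (by omega) (k+1) (j+1)
    rcases hb (k+1) with h' | h' <;> rcases hb (j+1) with h'' | h'' <;> omega
  -- decompositions at the last letter
  have hendk : Wnd w k n₀ = Wnd w k (n₀-1) + w (k+n₀) := by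
    have h1 : n₀ = (n₀-1) + 1 := by omega
    conv_lhs => rw [h1]
    rw [Wnd_succ]
    congr 2
    omega
  have hendj : Wnd w j n₀ = Wnd w j (n₀-1) + w (j+n₀) := by
    have h1 : n₀ = (n₀-1) + 1 := by omega
    conv_lhs => rw [h1]
    rw [Wnd_succ]
    congr 2
    omega
  have hlast : w (k+n₀) = 1 ∧ w (j+n₀) = 0 := by
    have hm1 := hmin (n₀-1) (by omega) k j
    rcases hb (k+n₀) with h' | h' <;> rcases hb (j+n₀) with h'' | h'' <;> omega
  have hdiff2 : Wnd w k n₀ = Wnd w j n₀ + 2 := by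
    have hm1 := hmin (n₀-1) (by omega) k j
    omega
  -- interior letters agree
  have hint : ∀ t, 2 ≤ t → t ≤ n₀ - 1 → w (k+t) = w (j+t) := by
    by_contra hcon2
    push_neg at hcon2
    have hEx : ∃ t, 2 ≤ t ∧ t ≤ n₀-1 ∧ w (k+t) ≠ w (j+t) := by
      obtain ⟨t₁, h1, h2', h3⟩ := hcon2
      exact ⟨t₁, h1, h2', h3⟩
    obtain ⟨ht2, htn, htne⟩ := Nat.find_spec hEx
    set t := Nat.find hEx with htdef
    have htmin : ∀ p, 2 ≤ p → p < t → w (k+p) = w (j+p) := by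
      intro p h2' hlt
      by_contra hne
      exact Nat.find_min hEx hlt ⟨h2', by omega, hne⟩
    set Q := fun p => 2 ≤ p ∧ p ≤ n₀-1 ∧ w (k+p) ≠ w (j+p) with hQdef
    have ht'spec : Q (Nat.findGreatest Q (n₀-1)) :=
      Nat.findGreatest_spec (m := t) htn ⟨ht2, htn, htne⟩
    set t' := Nat.findGreatest Q (n₀-1) with ht'def
    obtain ⟨ht'2, ht'n, ht'ne⟩ := ht'spec
    have ht'max : ∀ p, t' < p → p ≤ n₀-1 → w (k+p) = w (j+p) := by
      intro p h1 h2'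
      by_contra hne
      exact Nat.findGreatest_is_greatest h1 h2' ⟨by omega, h2', hne⟩
    have htt' : t ≤ t' := Nat.le_findGreatest htn ⟨ht2, htn, htne⟩
    -- case analysis on the letters at t
    rcases hb (k+t) with hkt | hkt <;> rcases hb (j+t) with hjt | hjt
    · exact htne (by omega)
    · -- w(k+t)=0, w(j+t)=1 : look at t'
      rcases hb (k+t') with hkt' | hkt' <;> rcases hb (j+t') with hjt' | hjt'
      · exact ht'ne (by omega)
      · -- w(k+t')=0, w(j+t')=1 : middle-segment argument
        -- prefix [1..t] has equal sums
        have hpre : Wnd w k t = Wnd w j t := by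
          rw [Wnd_decomp k t ht2, Wnd_decomp j t ht2]
          have hmid : Wnd w (k+1) (t-2) = Wnd w (j+1) (t-2) := by
            apply Wnd_congr
            intro i hi1 hile
            have e1 : k+1+i = k+(1+i) := by omega
            have e2 : j+1+i = j+(1+i) := by omega
            rw [e1, e2]
            exact htmin (1+i) (by omega) (by omega)
          omega
        rcases Nat.lt_or_ge t' t with hc | hc
        · omega
        rcases Nat.eq_or_lt_of_le hc with hc' | hc'
        · -- t' = t : whole-word diff ≤ 1, contradiction with hdiff2
          have hsuf : Wnd w (k+t) (n₀-t) = Wnd w (j+t) (n₀-t) + 1 := by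
            have e1 : n₀ - t = (n₀-t-1) + 1 := by omega
            rw [e1, Wnd_succ, Wnd_succ]
            have hmid : Wnd w (k+t) (n₀-t-1) = Wnd w (j+t) (n₀-t-1) := by
              apply Wnd_congr
              intro i hi1 hile
              have e2 : k+t+i = k+(t+i) := by omega
              have e3 : j+t+i = j+(t+i) := by omega
              rw [e2, e3]
              exact ht'max (t+i) (by omega) (by omega)
            have e4 : k+t+(n₀-t-1+1) = k+n₀ := by omega
            have e5 : j+t+(n₀-t-1+1) = j+n₀ := by omega
            rw [e4, e5]
            omega
          have hwk : Wnd w k n₀ = Wnd w k t + Wnd w (k+t) (n₀-t) := by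
            have e1 : n₀ = t + (n₀-t) := by omega
            conv_lhs => rw [e1]
            rw [Wnd_split]
          have hwj : Wnd w j n₀ = Wnd w j t + Wnd w (j+t) (n₀-t) := by
            have e1 : n₀ = t + (n₀-t) := by omega
            conv_lhs => rw [e1]
            rw [Wnd_split]
          omega
        · -- t < t' : middle window has diff 2, contradiction with minimality
          set L := t' - t - 1 with hLdef
          have hdecompk : Wnd w k n₀ =
              Wnd w k t + Wnd w (k+t) L + w (k+t') + Wnd w (k+t') (n₀-t') := by
            have e1 : n₀ = t + (L + (1 + (n₀-t'))) := by omega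
            conv_lhs => rw [e1]
            rw [Wnd_split, Wnd_split, Wnd_split, Wnd_one]
            have e2 : k+t+L+1 = k+t' := by omega
            rw [e2]
            ring
          have hdecompj : Wnd w j n₀ =
              Wnd w j t + Wnd w (j+t) L + w (j+t') + Wnd w (j+t') (n₀-t') := by
            have e1 : n₀ = t + (L + (1 + (n₀-t'))) := by omega
            conv_lhs => rw [e1]
            rw [Wnd_split, Wnd_split, Wnd_split, Wnd_one]
            have e2 : j+t+L+1 = j+t' := by omega
            rw [e2]
            ring
          have hsuf : Wnd w (k+t') (n₀-t') = Wnd w (j+t') (n₀-t') + 1 := by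
            have e1 : n₀ - t' = (n₀-t'-1) + 1 := by omega
            rw [e1, Wnd_succ, Wnd_succ]
            have hmid : Wnd w (k+t') (n₀-t'-1) = Wnd w (j+t') (n₀-t'-1) := by
              apply Wnd_congr
              intro i hi1 hile
              have e2 : k+t'+i = k+(t'+i) := by omega
              have e3 : j+t'+i = j+(t'+i) := by omega
              rw [e2, e3]
              exact ht'max (t'+i) (by omega) (by omega)
            have e4 : k+t'+(n₀-t'-1+1) = k+n₀ := by omega
            have e5 : j+t'+(n₀-t'-1+1) = j+n₀ := by omega
            rw [e4, e5]
            omega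
          have hmidwindow : Wnd w (j+t) L + 2 ≤ Wnd w (k+t) L := by omega
          have := hmin L (by omega) (k+t) (j+t)
          omega
      · -- w(k+t')=1, w(j+t')=0 : suffix argument at t'
        have hd : 2 ≤ n₀ - t' + 1 := by omega
        have hsufk : Wnd w (k+t'-1) (n₀-t'+1) =
            w (k+t') + Wnd w (k+t') (n₀-t'-1) + w (k+n₀) := by
          rw [Wnd_decomp _ _ hd]
          have e1 : k+t'-1+1 = k+t' := by omega
          have e2 : n₀-t'+1-2 = n₀-t'-1 := by omega
          have e3 : k+t'-1+(n₀-t'+1) = k+n₀ := by omega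
          rw [e1, e2, e3]
        have hsufj : Wnd w (j+t'-1) (n₀-t'+1) =
            w (j+t') + Wnd w (j+t') (n₀-t'-1) + w (j+n₀) := by
          rw [Wnd_decomp _ _ hd]
          have e1 : j+t'-1+1 = j+t' := by omega
          have e2 : n₀-t'+1-2 = n₀-t'-1 := by omega
          have e3 : j+t'-1+(n₀-t'+1) = j+n₀ := by omega
          rw [e1, e2, e3]
        have hmid : Wnd w (k+t') (n₀-t'-1) = Wnd w (j+t') (n₀-t'-1) := by
          apply Wnd_congr
          intro i hi1 hile
          have e2 : k+t'+i = k+(t'+i) := by omega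
          have e3 : j+t'+i = j+(t'+i) := by omega
          rw [e2, e3]
          exact ht'max (t'+i) (by omega) (by omega)
        have := hmin (n₀-t'+1) (by omega) (k+t'-1) (j+t'-1)
        omega
      · exact ht'ne (by omega)
    · -- w(k+t)=1, w(j+t)=0 : prefix argument at t
      have hprek : Wnd w k t = w (k+1) + Wnd w (k+1) (t-2) + w (k+t) := Wnd_decomp k t ht2
      have hprej : Wnd w j t = w (j+1) + Wnd w (j+1) (t-2) + w (j+t) := Wnd_decomp j t ht2
      have hmid : Wnd w (k+1) (t-2) = Wnd w (j+1) (t-2) := by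
        apply Wnd_congr
        intro i hi1 hile
        have e1 : k+1+i = k+(1+i) := by omega
        have e2 : j+1+i = j+(1+i) := by omega
        rw [e1, e2]
        exact htmin (1+i) (by omega) (by omega)
      have := hmin t (by omega) k j
      omega
    · exact htne (by omega)
  -- ****** the sandwich contradiction ******
  have hA'val : ∀ p : ℕ, Shf^[k+1] w p = w (k+1+p) := by
    intro p; rw [shf_iter]; congr 1; omega
  have hB'val : ∀ p : ℕ, Shf^[j+1] w p = w (j+1+p) := by
    intro p; rw [shf_iter]; congr 1; omega
  have hA'u : LexLe (Shf^[k+1] w) u := by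
    have h1 := (hbd k).2
    have h2 : (Shf^[k] w) 1 = (Prepend 1 1 u) 1 := by
      rw [shf_iter, prepend_val1]
      have : 1 + k = k + 1 := by omega
      rw [this, hfirst.1]
    have h3 := lexle_shf h2 h1
    apply lexle_congr (A := Shf (Shf^[k] w)) (B := Shf (Prepend 1 1 u)) ?_ ?_ h3
    · intro i _
      rw [← Function.iterate_succ_apply' Shf k w]
    · intro i hi
      show Prepend 1 1 u (i+1) = u i
      rw [prepend_val _ _ (i+1) (by omega)]
      congr 1
  have huB' : LexLe u (Shf^[j+1] w) := by
    have h1 := (hbd j).1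
    have h2 : (Prepend 0 1 u) 1 = (Shf^[j] w) 1 := by
      rw [shf_iter, prepend_val1]
      have : 1 + j = j + 1 := by omega
      rw [this, hfirst.2]
    have h3 := lexle_shf h2 h1
    apply lexle_congr (A := Shf (Prepend 0 1 u)) (B := Shf (Shf^[j] w)) ?_ ?_ h3
    · intro i hi
      show Prepend 0 1 u (i+1) = u i
      rw [prepend_val _ _ (i+1) (by omega)]
      congr 1
    · intro i _
      rw [← Function.iterate_succ_apply' Shf j w]
  -- agreement of u with the common interior
  have hxy : ∀ p, 1 ≤ p → p ≤ n₀ - 2 → w (k+1+p) = w (j+1+p) := by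
    intro p hp1 hp2
    have e1 : k+1+p = k+(1+p) := by omega
    have e2 : j+1+p = j+(1+p) := by omega
    rw [e1, e2]
    exact hint (1+p) (by omega) (by omega)
  have hag : ∀ i, 1 ≤ i → i ≤ n₀ - 2 → u i = w (k+1+i) := by
    intro i
    induction i using Nat.strong_induction_on with
    | _ i ih =>
      intro hi1 hin
      have hle1 : Shf^[k+1] w i ≤ u i := by
        apply lexle_forces hA'u i hi1
        intro p hp1 hpi
        rw [hA'val p]
        exact ih p hpi hp1 (by omega)
      have hle2 : u i ≤ Shf^[j+1] w i := by
        apply lexle_forces huB' i hi1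
        intro p hp1 hpi
        rw [hB'val p, ← hxy p hp1 (by omega)]
        exact (ih p hpi hp1 (by omega)).symm
      rw [hA'val i] at hle1
      rw [hB'val i, ← hxy i hi1 hin] at hle2
      omega
  -- position n₀ - 1 : contradiction
  have hfin1 : Shf^[k+1] w (n₀-1) ≤ u (n₀-1) := by
    apply lexle_forces hA'u (n₀-1) (by omega)
    intro p hp1 hpi
    rw [hA'val p]
    exact hag p hp1 (by omega)
  have hfin2 : u (n₀-1) ≤ Shf^[j+1] w (n₀-1) := by
    apply lexle_forces huB' (n₀-1) (by omega)
    intro p hp1 hpi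
    rw [hB'val p, ← hxy p hp1 (by omega)]
    exact (hag p hp1 (by omega)).symm
  rw [hA'val (n₀-1)] at hfin1
  rw [hB'val (n₀-1)] at hfin2
  have e1 : k+1+(n₀-1) = k+n₀ := by omega
  have e2 : j+1+(n₀-1) = j+n₀ := by omega
  rw [e1] at hfin1
  rw [e2] at hfin2
  omega

end Part6
section Part7

/-- existence of the minimal window value -/
lemma cmin_exists {w : ℕ → ℤ} (hb : IsBinary w) (n : ℕ) :
    ∃ c : ℤ, (∃ k, Wnd w k n = c) ∧ (∀ k, c ≤ Wnd w k n) := by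
  obtain ⟨lb, ⟨⟨k, hk⟩, hleast⟩⟩ := Int.exists_least_of_bdd
    (P := fun z => ∃ k, Wnd w k n = z)
    ⟨0, by rintro z ⟨k, rfl⟩; exact Wnd_nonneg hb k n⟩ ⟨Wnd w 0 n, 0, rfl⟩
  exact ⟨lb, ⟨k, hk⟩, fun k' => hleast _ ⟨k', rfl⟩⟩

/-- Existence of a slope. -/
lemma slope_exists {w : ℕ → ℤ} (hb : IsBinary w) (hap : Aperiodic w)
    (hbal : ∀ n k j, Wnd w k n ≤ Wnd w j n + 1) :
    ∃ θ : ℝ, 0 ≤ θ ∧ θ ≤ 1 ∧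
      ∀ n : ℕ, ∃ c : ℤ, (∃ k, Wnd w k n = c) ∧
        (∀ k, c ≤ Wnd w k n ∧ Wnd w k n ≤ c + 1) ∧
        ((c:ℝ) ≤ (n:ℝ)*θ ∧ (n:ℝ)*θ ≤ (c:ℝ) + 1) := by
  classical
  choose cmin hcm using cmin_exists hb
  have hcmw : ∀ n, ∃ k, Wnd w k n = cmin n := fun n => (hcm n).1
  have hcmle : ∀ n k, cmin n ≤ Wnd w k n := fun n => (hcm n).2
  have hcub : ∀ n k, Wnd w k n ≤ cmin n + 1 := by
    intro n k
    obtain ⟨k₀, hk₀⟩ := hcmw n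
    have := hbal n k k₀
    omega
  have hc0 : cmin 0 = 0 := by
    obtain ⟨k₀, hk₀⟩ := hcmw 0
    rw [Wnd_zero] at hk₀
    omega
  have hcnn : ∀ n, 0 ≤ cmin n := by
    intro n
    obtain ⟨k₀, hk₀⟩ := hcmw n
    have := Wnd_nonneg hb k₀ n
    omega
  have hsuper : ∀ a b, cmin a + cmin b ≤ cmin (a+b) := by
    intro a b
    obtain ⟨k₀, hk₀⟩ := hcmw (a+b)
    rw [← hk₀, Wnd_split]
    have h1 := hcmle a k₀
    have h2 := hcmle b (k₀+a)
    omega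
  have hsub : ∀ a b, cmin (a+b) ≤ cmin a + cmin b + 1 := by
    intro a b
    obtain ⟨k₁, hk₁⟩ := hcmw a
    have h1 := hcmle (a+b) k₁
    have h2 : Wnd w k₁ (a+b) = Wnd w k₁ a + Wnd w (k₁+a) b := Wnd_split w k₁ a b
    have h3 := hcub b (k₁+a)
    omega
  have hiterlow : ∀ n j : ℕ, (n:ℤ) * cmin j ≤ cmin (n*j) := by
    intro n j
    induction n with
    | zero => simp [hc0]
    | succ n ih =>
        have h1 := hsuper (n*j) j
        have h2 : (n+1)*j = n*j + j := by ring
        rw [h2]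
        push_cast
        nlinarith [hcnn j]
  have hiterhigh : ∀ n j : ℕ, 1 ≤ n → cmin (n*j) + 1 ≤ (n:ℤ) * (cmin j + 1) := by
    intro n j hn
    induction n with
    | zero => omega
    | succ n ih =>
        rcases Nat.eq_zero_or_pos n with rfl | hn'
        · simp
        · have h1 := hsub (n*j) j
          have h2 : (n+1)*j = n*j + j := by ring
          rw [h2]
          have := ih hn'
          push_cast
          push_cast at this
          nlinarith
  set S : Set ℝ := {x : ℝ | ∃ n : ℕ, 1 ≤ n ∧ x = ((cmin n : ℝ) + 1)/(n:ℝ)} with hSdef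
  have hSne : S.Nonempty := ⟨(cmin 1 : ℝ) + 1, 1, le_rfl, by norm_num⟩
  have hSbdd : BddBelow S := by
    refine ⟨0, ?_⟩
    rintro x ⟨n, hn1, rfl⟩
    have h1 : (0:ℝ) ≤ (cmin n : ℝ) + 1 := by
      have := hcnn n
      push_cast
      exact_mod_cast by omega
    positivity
  set θ := sInf S with hθdef
  have hθub : ∀ n : ℕ, 1 ≤ n → θ ≤ ((cmin n : ℝ) + 1)/(n:ℝ) := by
    intro n hn
    apply csInf_le hSbdd
    exact ⟨n, hn, rfl⟩
  have hθlb : ∀ n : ℕ, 1 ≤ n → (cmin n : ℝ)/(n:ℝ) ≤ θ := by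
    intro n hn
    apply le_csInf hSne
    rintro x ⟨m, hm1, rfl⟩
    rw [div_le_div_iff₀ (by positivity) (by positivity)]
    have key : (m:ℤ) * cmin n ≤ (n:ℤ) * (cmin m + 1) := by
      have h1 := hiterlow m n
      have h2 := hiterhigh n m (by omega)
      have h3 : m * n = n * m := by ring
      rw [h3] at h1
      omega
    calc (cmin n : ℝ) * (m:ℝ) = ((m * cmin n : ℤ) : ℝ) := by push_cast; ring
      _ ≤ (((n:ℤ) * (cmin m + 1) : ℤ) : ℝ) := by exact_mod_cast key
      _ = ((cmin m : ℝ) + 1) * (n:ℝ) := by push_cast; ring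
  have hθ0 : 0 ≤ θ := by
    apply le_csInf hSne
    rintro x ⟨n, hn1, rfl⟩
    have := hcnn n
    have h1 : (0:ℝ) ≤ (cmin n : ℝ) + 1 := by exact_mod_cast by omega
    positivity
  have hc1 : cmin 1 = 0 := by
    rcases hb 1 with h1 | h1
    · have := hcmle 1 0
      rw [Wnd_one] at this
      simp at this
      have := hcnn 1
      omega
    · -- if cmin 1 = 1 then w is constant 1, contradicting aperiodicity
      by_contra hne
      have hcm1 : cmin 1 = 1 := by
        have hA := hcnn 1
        have hB := hcmle 1 0
        rw [Wnd_one] at hB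
        rcases hb (0+1) with h2 | h2 <;> omega
      exfalso
      apply hap
      refine ⟨1, le_rfl, 1, le_rfl, ?_⟩
      intro n hn
      have hA := hcmle 1 (n-1)
      have hB := hcmle 1 n
      rw [Wnd_one, hcm1] at hA hB
      have e1 : n - 1 + 1 = n := by omega
      rw [e1] at hA
      rcases hb n with h2 | h2 <;> rcases hb (n+1) with h3 | h3 <;> omega
  have hθ1 : θ ≤ 1 := by
    have := hθub 1 le_rfl
    rw [hc1] at this
    simpa using this
  refine ⟨θ, hθ0, hθ1, ?_⟩
  intro n
  refine ⟨cmin n, hcmw n, fun k => ⟨hcmle n k, hcub n k⟩, ?_⟩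
  rcases Nat.eq_zero_or_pos n with rfl | hn
  · rw [hc0]
    norm_num
  have hA : (cmin n : ℝ) ≤ (n:ℝ)*θ := by
    have := hθlb n hn
    rw [div_le_iff₀ (by positivity)] at this
    linarith [this]
  have hB : (n:ℝ)*θ ≤ (cmin n : ℝ) + 1 := by
    have := hθub n hn
    rw [le_div_iff₀ (by positivity)] at this
    linarith [this]
  exact ⟨hA, hB⟩

/-- Derived per-window bounds. -/
lemma wnd_theta_bounds {w : ℕ → ℤ} {θ : ℝ}
    (hwin : ∀ n : ℕ, ∃ c : ℤ, (∃ k, Wnd w k n = c) ∧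
        (∀ k, c ≤ Wnd w k n ∧ Wnd w k n ≤ c + 1) ∧
        ((c:ℝ) ≤ (n:ℝ)*θ ∧ (n:ℝ)*θ ≤ (c:ℝ) + 1)) :
    ∀ (k n : ℕ), ((n:ℝ)*θ - 1) ≤ (Wnd w k n : ℝ) ∧ (Wnd w k n : ℝ) ≤ (n:ℝ)*θ + 1 := by
  intro k n
  obtain ⟨c, _, hr, hcθ⟩ := hwin n
  have h1 := (hr k).1
  have h2 := (hr k).2
  have h1' : (c:ℝ) ≤ (Wnd w k n : ℝ) := by exact_mod_cast h1
  have h2' : (Wnd w k n : ℝ) ≤ (c:ℝ) + 1 := by exact_mod_cast h2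
  constructor
  · linarith [hcθ.2]
  · linarith [hcθ.1]

end Part7
section Part8

lemma Wnd_shift (w : ℕ → ℤ) (k n : ℕ) : Wnd w (k+1) n = Wnd w k n - w (k+1) + w (k+n+1) := by
  have h1 : Wnd w k (n+1) = Wnd w k n + w (k+(n+1)) := Wnd_succ w k n
  have h2 : Wnd w k (1+n) = Wnd w k 1 + Wnd w (k+1) n := Wnd_split w k 1 n
  rw [Wnd_one] at h2
  have e : 1 + n = n + 1 := by omega
  rw [e] at h2
  have e2 : k+(n+1) = k+n+1 := by omega
  rw [e2] at h1
  omega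

lemma periodic_contra {w : ℕ → ℤ} (hap : Aperiodic w) {q K : ℕ} (hq : 1 ≤ q) {p : ℤ}
    (hconst : ∀ k, K ≤ k → Wnd w k q = p) : False := by
  apply hap
  refine ⟨q, hq, K+1, by omega, ?_⟩
  intro n hn
  have h1 := hconst (n-1) (by omega)
  have h2 := hconst n (by omega)
  have h3 := Wnd_shift w (n-1) q
  have e : n-1+1 = n := by omega
  rw [e] at h3
  have e2 : n-1+q+1 = n+q := by omega
  rw [e2] at h3
  omega

lemma pair_big {w : ℕ → ℤ} {θ : ℝ} {p : ℤ} {q : ℕ} (hq1 : 1 ≤ q)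
    (hWb : ∀ (k n : ℕ), ((n:ℝ)*θ - 1) ≤ (Wnd w k n : ℝ) ∧ (Wnd w k n : ℝ) ≤ (n:ℝ)*θ + 1)
    (hqθ : (q:ℝ)*θ = (p:ℝ))
    (hcop : ∀ L : ℕ, (q:ℤ) ∣ (L:ℤ)*p → q ∣ L)
    (hlow : ∀ k, p ≤ Wnd w k q)
    {a b : ℕ} (hab : a < b) (ha : Wnd w a q = p+1) (hb' : Wnd w b q = p+1) : False := by
  set L := b - a with hLdef
  have hL1 : 1 ≤ L := by omega
  set A := Wnd w a L with hAdef
  have h1 : Wnd w a (L+q) = A + (p+1) := by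
    rw [Wnd_split]
    have e : a + L = b := by omega
    rw [e, hb', hAdef]
  have hup : (A:ℝ) ≤ (L:ℝ)*θ := by
    have h2 := (hWb a (L+q)).2
    rw [h1] at h2
    push_cast at h2
    have hexp : ((L:ℝ)+(q:ℝ))*θ = (L:ℝ)*θ + (p:ℝ) := by rw [add_mul, hqθ]
    linarith
  have hdown : (L:ℝ)*θ ≤ (A:ℝ) := by
    rcases le_or_gt q L with hq' | hq'
    · have h3 : Wnd w a L = Wnd w a q + Wnd w (a+q) (L-q) := by
        have e : L = q + (L-q) := by omega
        conv_lhs => rw [e]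
        rw [Wnd_split]
      have h5 : Wnd w (a+q) (L-q) = A - (p+1) := by omega
      have h4 := (hWb (a+q) (L-q)).1
      rw [h5] at h4
      push_cast at h4
      have hc : ((L-q:ℕ):ℝ) = (L:ℝ) - (q:ℝ) := by
        push_cast [Nat.cast_sub hq']
        ring
      rw [hc] at h4
      have hexp : ((L:ℝ)-(q:ℝ))*θ = (L:ℝ)*θ - (p:ℝ) := by rw [sub_mul, hqθ]
      linarith
    · have h3 : Wnd w a q = Wnd w a L + Wnd w (a+L) (q-L) := by
        have e : q = L + (q-L) := by omega
        conv_lhs => rw [e]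
        rw [Wnd_split]
      have e : a + L = b := by omega
      rw [e] at h3
      have h5 : Wnd w b (q-L) = (p+1) - A := by omega
      have h4 := (hWb b (q-L)).2
      rw [h5] at h4
      push_cast at h4
      have hc : ((q-L:ℕ):ℝ) = (q:ℝ) - (L:ℝ) := by
        push_cast [Nat.cast_sub hq'.le]
        ring
      rw [hc] at h4
      have hexp : ((q:ℝ)-(L:ℝ))*θ = (p:ℝ) - (L:ℝ)*θ := by rw [sub_mul, hqθ]
      linarith
  have hAeq : (A:ℝ) = (L:ℝ)*θ := le_antisymm hup hdown
  have hALp : A * (q:ℤ) = (L:ℤ) * p := by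
    have h6 : (A:ℝ)*(q:ℝ) = (L:ℝ)*(p:ℝ) := by
      rw [hAeq, ← hqθ]
      ring
    exact_mod_cast h6
  have hdvd : q ∣ L := by
    apply hcop
    exact ⟨A, by linear_combination -hALp⟩
  obtain ⟨m, hm⟩ := hdvd
  have hm1 : 1 ≤ m := by
    rcases Nat.eq_zero_or_pos m with rfl | h
    · omega
    · exact h
  have hAmp : A = (m:ℤ) * p := by
    have h6 : (A:ℝ) = ((m:ℕ):ℝ) * (p:ℝ) := by
      rw [hAeq, hm, ← hqθ]
      push_cast
      ring
    exact_mod_cast h6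
  have hblocks : ∀ t : ℕ, (t:ℤ)*p ≤ Wnd w (a+q) (t*q) := by
    intro t
    induction t with
    | zero => simp [Wnd_zero]
    | succ t ih =>
        have e : (t+1)*q = t*q + q := by rw [Nat.succ_mul]
        rw [e, Wnd_split]
        have hl := hlow (a+q+t*q)
        push_cast
        push_cast at ih
        linarith
  have hfin : Wnd w a L = Wnd w a q + Wnd w (a+q) ((m-1)*q) := by
    have e : L = q + (m-1)*q := by
      obtain ⟨m', rfl⟩ : ∃ m', m = m'+1 := ⟨m-1, by omega⟩
      have e1 : q*(m'+1) = q*m' + q := Nat.mul_succ q m'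
      have e2 : (m'+1-1)*q = q*m' := by rw [Nat.succ_sub_one, Nat.mul_comm]
      omega
    conv_lhs => rw [e]
    rw [Wnd_split]
  have hbl := hblocks (m-1)
  rw [ha] at hfin
  have hcast : ((m-1:ℕ):ℤ) = (m:ℤ) - 1 := by
    push_cast [Nat.cast_sub hm1]
    ring
  rw [hcast] at hbl
  have hexpand : ((m:ℤ)-1)*p = (m:ℤ)*p - p := by ring
  rw [hexpand] at hbl
  rw [← hAdef] at hfin
  omega

lemma pair_small {w : ℕ → ℤ} {θ : ℝ} {p : ℤ} {q : ℕ} (hq1 : 1 ≤ q)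
    (hWb : ∀ (k n : ℕ), ((n:ℝ)*θ - 1) ≤ (Wnd w k n : ℝ) ∧ (Wnd w k n : ℝ) ≤ (n:ℝ)*θ + 1)
    (hqθ : (q:ℝ)*θ = (p:ℝ))
    (hcop : ∀ L : ℕ, (q:ℤ) ∣ (L:ℤ)*p → q ∣ L)
    (hhigh : ∀ k, Wnd w k q ≤ p)
    {a b : ℕ} (hab : a < b) (ha : Wnd w a q = p-1) (hb' : Wnd w b q = p-1) : False := by
  set L := b - a with hLdef
  have hL1 : 1 ≤ L := by omega
  set A := Wnd w a L with hAdef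
  have h1 : Wnd w a (L+q) = A + (p-1) := by
    rw [Wnd_split]
    have e : a + L = b := by omega
    rw [e, hb', hAdef]
  have hdown : (L:ℝ)*θ ≤ (A:ℝ) := by
    have h2 := (hWb a (L+q)).1
    rw [h1] at h2
    push_cast at h2
    have hexp : ((L:ℝ)+(q:ℝ))*θ = (L:ℝ)*θ + (p:ℝ) := by rw [add_mul, hqθ]
    linarith
  have hup : (A:ℝ) ≤ (L:ℝ)*θ := by
    rcases le_or_gt q L with hq' | hq'
    · have h3 : Wnd w a L = Wnd w a q + Wnd w (a+q) (L-q) := by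
        have e : L = q + (L-q) := by omega
        conv_lhs => rw [e]
        rw [Wnd_split]
      have h5 : Wnd w (a+q) (L-q) = A - (p-1) := by omega
      have h4 := (hWb (a+q) (L-q)).2
      rw [h5] at h4
      push_cast at h4
      have hc : ((L-q:ℕ):ℝ) = (L:ℝ) - (q:ℝ) := by
        push_cast [Nat.cast_sub hq']
        ring
      rw [hc] at h4
      have hexp : ((L:ℝ)-(q:ℝ))*θ = (L:ℝ)*θ - (p:ℝ) := by rw [sub_mul, hqθ]
      linarith
    · have h3 : Wnd w a q = Wnd w a L + Wnd w (a+L) (q-L) := by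
        have e : q = L + (q-L) := by omega
        conv_lhs => rw [e]
        rw [Wnd_split]
      have e : a + L = b := by omega
      rw [e] at h3
      have h5 : Wnd w b (q-L) = (p-1) - A := by omega
      have h4 := (hWb b (q-L)).1
      rw [h5] at h4
      push_cast at h4
      have hc : ((q-L:ℕ):ℝ) = (q:ℝ) - (L:ℝ) := by
        push_cast [Nat.cast_sub hq'.le]
        ring
      rw [hc] at h4
      have hexp : ((q:ℝ)-(L:ℝ))*θ = (p:ℝ) - (L:ℝ)*θ := by rw [sub_mul, hqθ]
      linarith
  have hAeq : (A:ℝ) = (L:ℝ)*θ := le_antisymm hup hdown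
  have hALp : A * (q:ℤ) = (L:ℤ) * p := by
    have h6 : (A:ℝ)*(q:ℝ) = (L:ℝ)*(p:ℝ) := by
      rw [hAeq, ← hqθ]
      ring
    exact_mod_cast h6
  have hdvd : q ∣ L := by
    apply hcop
    exact ⟨A, by linear_combination -hALp⟩
  obtain ⟨m, hm⟩ := hdvd
  have hm1 : 1 ≤ m := by
    rcases Nat.eq_zero_or_pos m with rfl | h
    · omega
    · exact h
  have hAmp : A = (m:ℤ) * p := by
    have h6 : (A:ℝ) = ((m:ℕ):ℝ) * (p:ℝ) := by
      rw [hAeq, hm, ← hqθ]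
      push_cast
      ring
    exact_mod_cast h6
  have hblocks : ∀ t : ℕ, Wnd w (a+q) (t*q) ≤ (t:ℤ)*p := by
    intro t
    induction t with
    | zero => simp [Wnd_zero]
    | succ t ih =>
        have e : (t+1)*q = t*q + q := by rw [Nat.succ_mul]
        rw [e, Wnd_split]
        have hl := hhigh (a+q+t*q)
        push_cast
        push_cast at ih
        linarith
  have hfin : Wnd w a L = Wnd w a q + Wnd w (a+q) ((m-1)*q) := by
    have e : L = q + (m-1)*q := by
      obtain ⟨m', rfl⟩ : ∃ m', m = m'+1 := ⟨m-1, by omega⟩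
      have e1 : q*(m'+1) = q*m' + q := Nat.mul_succ q m'
      have e2 : (m'+1-1)*q = q*m' := by rw [Nat.succ_sub_one, Nat.mul_comm]
      omega
    conv_lhs => rw [e]
    rw [Wnd_split]
  have hbl := hblocks (m-1)
  rw [ha] at hfin
  have hcast : ((m-1:ℕ):ℤ) = (m:ℤ) - 1 := by
    push_cast [Nat.cast_sub hm1]
    ring
  rw [hcast] at hbl
  have hexpand : ((m:ℤ)-1)*p = (m:ℤ)*p - p := by ring
  rw [hexpand] at hbl
  rw [← hAdef] at hfin
  omega

lemma slope_irrational {w : ℕ → ℤ} (hap : Aperiodic w) {θ : ℝ} (hθ0 : 0 ≤ θ)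
    (hwin : ∀ n : ℕ, ∃ c : ℤ, (∃ k, Wnd w k n = c) ∧
        (∀ k, c ≤ Wnd w k n ∧ Wnd w k n ≤ c + 1) ∧
        ((c:ℝ) ≤ (n:ℝ)*θ ∧ (n:ℝ)*θ ≤ (c:ℝ) + 1)) :
    Irrational θ := by
  by_contra hnirr
  obtain ⟨r, hr⟩ := not_not.mp hnirr
  set q := r.den with hqdef
  set p := r.num with hpdef
  have hq1 : 1 ≤ q := r.pos
  have hqθ : (q:ℝ)*θ = (p:ℝ) := by
    rw [← hr]
    have hQ : (q:ℚ) * r = (p:ℚ) := by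
      have hd : (q:ℚ) ≠ 0 := by
        have := r.pos
        positivity
      rw [mul_comm]
      conv_lhs => rw [← Rat.num_div_den r]
      field_simp
      rw [hqdef, hpdef]; ring
    calc (q:ℝ)*(r:ℝ) = (((q:ℚ) * r : ℚ):ℝ) := by push_cast; ring
      _ = (p:ℝ) := by rw [hQ]; push_cast; ring
  have hp0 : 0 ≤ p := by
    have h1 : (0:ℚ) ≤ r := by
      have h2 : (0:ℝ) ≤ (r:ℝ) := by rw [hr]; exact hθ0
      exact_mod_cast h2
    exact Rat.num_nonneg.mpr h1
  have hWb := wnd_theta_bounds hwin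
  have hcop : ∀ L : ℕ, (q:ℤ) ∣ (L:ℤ)*p → q ∣ L := by
    intro L hdvd
    have h1 : Int.gcd (q:ℤ) p = 1 := by
      have h2 := r.reduced
      have : Int.gcd (q:ℤ) p = Nat.gcd q p.natAbs := by
        unfold Int.gcd
        rw [Int.natAbs_natCast]
      rw [this, Nat.gcd_comm]
      exact h2
    have h2 := Int.dvd_of_dvd_mul_left_of_gcd_one hdvd h1
    exact_mod_cast h2
  obtain ⟨c, ⟨k₀, hk₀⟩, hrange, hcθ⟩ := hwin q
  have hcp : c = p ∨ c + 1 = p := by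
    have h1 : (c:ℝ) ≤ (p:ℝ) := by rw [← hqθ]; exact hcθ.1
    have h2 : (p:ℝ) ≤ (c:ℝ)+1 := by
      rw [← hqθ]
      have := hcθ.2
      linarith
    have h1' : c ≤ p := by exact_mod_cast h1
    have h2' : p ≤ c+1 := by exact_mod_cast h2
    omega
  rcases hcp with hc | hc
  · -- c = p : windows in {p, p+1}
    have hqθc : (q:ℝ)*θ = (c:ℝ) := by rw [hc]; exact hqθ
    have hcopc : ∀ L : ℕ, (q:ℤ) ∣ (L:ℤ)*c → q ∣ L := by
      intro L h
      apply hcop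
      rwa [hc] at h
    by_cases hE : ∃ a, Wnd w a q = c+1
    · obtain ⟨a₀, ha₀⟩ := hE
      apply periodic_contra hap hq1 (K := a₀+1) (p := c)
      intro k hk
      by_cases hWk : Wnd w k q = c+1
      · exact (pair_big hq1 hWb hqθc hcopc (fun k' => (hrange k').1)
          (show a₀ < k by omega) ha₀ hWk).elim
      · have h1 := (hrange k).1
        have h2 := (hrange k).2
        omega
    · push_neg at hE
      apply periodic_contra hap hq1 (K := 0) (p := c)
      intro k _
      have h1 := (hrange k).1
      have h2 := (hrange k).2
      have := hE k
      omega
  · -- c + 1 = p : windows in {p-1, p}, and the minimum p-1 is attained at k₀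
    apply periodic_contra hap hq1 (K := k₀+1) (p := p)
    intro k hk
    by_cases hWk : Wnd w k q = p-1
    · exact (pair_small hq1 hWb hqθ hcop
        (fun k' => by have := (hrange k').2; omega)
        (show k₀ < k by omega) (by omega) hWk).elim
    · have h1 := (hrange k).1
      have h2 := (hrange k).2
      omega

end Part8
section Part9

lemma rho_exists {w : ℕ → ℤ} {θ : ℝ} (hirr : Irrational θ)
    (hWb : ∀ (k n : ℕ), ((n:ℝ)*θ - 1) ≤ (Wnd w k n : ℝ) ∧ (Wnd w k n : ℝ) ≤ (n:ℝ)*θ + 1) :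
    ∃ ρ : ℝ,
      (∀ n : ℕ, 1 ≤ n → w n = ⌊((n:ℝ)+1)*θ+ρ⌋ - ⌊(n:ℝ)*θ+ρ⌋) ∨
      (∀ n : ℕ, 1 ≤ n → w n = ⌈((n:ℝ)+1)*θ+ρ⌉ - ⌈(n:ℝ)*θ+ρ⌉) := by
  classical
  set d : ℕ → ℝ := fun n => (Wnd w 0 n : ℝ) - ((n:ℝ)+1)*θ with hddef
  have hpair : ∀ a b : ℕ, b < a → |d a - d b| < 1 := by
    intro a b hba
    have hsplit : Wnd w 0 a = Wnd w 0 b + Wnd w b (a-b) := by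
      have e : a = b + (a-b) := by omega
      conv_lhs => rw [e]
      rw [Wnd_split]
      have e2 : 0+b = b := by omega
      rw [e2]
    have h1 := (hWb b (a-b)).1
    have h2 := (hWb b (a-b)).2
    have hLpos : (0:ℝ) < ((a-b:ℕ):ℝ) := by
      have : 1 ≤ a - b := by omega
      exact_mod_cast Nat.lt_of_lt_of_le Nat.zero_lt_one this
    have heq : d a - d b = (Wnd w b (a-b) : ℝ) - ((a-b:ℕ):ℝ)*θ := by
      simp only [hddef]
      rw [hsplit]
      push_cast [Nat.cast_sub hba.le]
      ring
    rw [heq]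
    have hne1 : (Wnd w b (a-b) : ℝ) - ((a-b:ℕ):ℝ)*θ ≠ 1 := by
      intro h
      apply hirr
      refine ⟨((Wnd w b (a-b) - 1 : ℤ) : ℚ) / ((a-b : ℕ):ℚ), ?_⟩
      push_cast
      rw [div_eq_iff (by exact_mod_cast hLpos.ne')]
      linarith
    have hne2 : (Wnd w b (a-b) : ℝ) - ((a-b:ℕ):ℝ)*θ ≠ -1 := by
      intro h
      apply hirr
      refine ⟨((Wnd w b (a-b) + 1 : ℤ) : ℚ) / ((a-b : ℕ):ℚ), ?_⟩
      push_cast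
      rw [div_eq_iff (by exact_mod_cast hLpos.ne')]
      linarith
    rw [abs_lt]
    constructor
    · rcases lt_or_eq_of_le (by linarith : (-1:ℝ) ≤ (Wnd w b (a-b) : ℝ) - ((a-b:ℕ):ℝ)*θ) with h | h
      · exact h
      · exact absurd h.symm hne2
    · rcases lt_or_eq_of_le (by linarith : (Wnd w b (a-b) : ℝ) - ((a-b:ℕ):ℝ)*θ ≤ 1) with h | h
      · exact h
      · exact absurd h hne1
  have habs : ∀ a b : ℕ, a ≠ b → |d a - d b| < 1 := by
    intro a b hne
    rcases Nat.lt_or_ge b a with h | h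
    · exact hpair a b h
    · rw [abs_sub_comm]
      exact hpair b a (by omega)
  set ρ := sSup (Set.range d) with hρdef
  have hbdd : BddAbove (Set.range d) := by
    refine ⟨d 0 + 1, ?_⟩
    rintro x ⟨n, rfl⟩
    rcases Nat.eq_zero_or_pos n with rfl | hn
    · linarith
    · have := hpair n 0 hn
      rw [abs_lt] at this
      linarith
  have hSne : (Set.range d).Nonempty := ⟨d 0, 0, rfl⟩
  have hle : ∀ n, d n ≤ ρ := fun n => le_csSup hbdd ⟨n, rfl⟩
  by_cases hall : ∀ n : ℕ, ρ < d n + 1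
  · refine ⟨ρ, Or.inl ?_⟩
    have hfl : ∀ n : ℕ, ⌊((n:ℝ)+1)*θ + ρ⌋ = Wnd w 0 n := by
      intro n
      rw [Int.floor_eq_iff]
      constructor
      · have := hle n
        simp only [hddef] at this
        linarith
      · have := hall n
        simp only [hddef] at this
        push_cast
        linarith
    intro n hn
    obtain ⟨m, rfl⟩ : ∃ m, n = m+1 := ⟨n-1, by omega⟩
    have h1 := hfl (m+1)
    have h2 := hfl m
    have hw : Wnd w 0 (m+1) = Wnd w 0 m + w (m+1) := by
      rw [Wnd_succ]
      congr 2
      omega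
    push_cast at h1 ⊢
    rw [h1, h2]
    omega
  · push_neg at hall
    obtain ⟨n₀, hn₀⟩ := hall
    have hstrict : ∀ m, d m < ρ := by
      intro m
      rcases lt_or_eq_of_le (hle m) with h | h
      · exact h
      · exfalso
        rcases eq_or_ne m n₀ with rfl | hne'
        · linarith
        · have h2 := habs m n₀ hne'
          rw [h, abs_lt] at h2
          linarith
    have hub : ∀ n, ρ ≤ d n + 1 := by
      intro n
      by_contra hlt
      push_neg at hlt
      obtain ⟨x, ⟨m, rfl⟩, hx⟩ := exists_lt_of_lt_csSup hSne hlt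
      have hmn : m ≠ n := by
        intro h
        subst h
        linarith
      have := habs m n hmn
      rw [abs_lt] at this
      linarith
    refine ⟨ρ, Or.inr ?_⟩
    have hcl : ∀ n : ℕ, ⌈((n:ℝ)+1)*θ + ρ⌉ = Wnd w 0 n + 1 := by
      intro n
      rw [Int.ceil_eq_iff]
      constructor
      · have := hstrict n
        simp only [hddef] at this
        push_cast
        linarith
      · have := hub n
        simp only [hddef] at this
        push_cast
        linarith
    intro n hn
    obtain ⟨m, rfl⟩ : ∃ m, n = m+1 := ⟨n-1, by omega⟩
    have h1 := hcl (m+1)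
    have h2 := hcl m
    have hw : Wnd w 0 (m+1) = Wnd w 0 m + w (m+1) := by
      rw [Wnd_succ]
      congr 2
      omega
    push_cast at h1 ⊢
    rw [h1, h2]
    omega

/-- Full backward direction. -/
lemma backward {w u : ℕ → ℤ} (hb : IsBinary w) (hap : Aperiodic w) (hu : IsBinary u)
    (hbd : ∀ n : ℕ, LexLe (Prepend 0 1 u) (Shf^[n] w) ∧ LexLe (Shf^[n] w) (Prepend 1 1 u)) :
    ∃ θ, IsSturmian θ w := by
  have hbal := balance hb hu hbd
  obtain ⟨θ, hθ0, hθ1, hwin⟩ := slope_exists hb hap hbal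
  have hirr := slope_irrational hap hθ0 hwin
  have hWb := wnd_theta_bounds hwin
  obtain ⟨ρ, hρ⟩ := rho_exists hirr hWb
  refine ⟨θ, hirr, ⟨?_, ?_⟩, ρ, hρ⟩
  · rcases lt_or_eq_of_le hθ0 with h | h
    · exact h
    · exact absurd ⟨0, by rw [← h]; norm_num⟩ hirr
  · rcases lt_or_eq_of_le hθ1 with h | h
    · exact h
    · exact absurd ⟨1, by rw [h]; norm_num⟩ hirr

end Part9

theorem stmt19 (w : ℕ → ℤ) (hb : IsBinary w) (hap : Aperiodic w) :
    ((∃ θ, IsSturmian θ w) ↔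
      ∃ u, IsBinary u ∧ ∀ n : ℕ,
        LexLe (Prepend 0 1 u) (Shf^[n] w) ∧ LexLe (Shf^[n] w) (Prepend 1 1 u)) ∧
    (∀ θ, IsSturmian θ w →
      (∀ u, IsBinary u →
        (∀ n : ℕ, LexLe (Prepend 0 1 u) (Shf^[n] w) ∧ LexLe (Shf^[n] w) (Prepend 1 1 u)) →
        EqW u (charWord θ)) ∧
      (∀ n : ℕ, LexLe (Prepend 0 1 (charWord θ)) (Shf^[n] w)) ∧
      (∀ v, IsBinary v → (∀ n : ℕ, LexLe v (Shf^[n] w)) →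
        LexLe v (Prepend 0 1 (charWord θ))) ∧
      (∀ n : ℕ, LexLe (Shf^[n] w) (Prepend 1 1 (charWord θ))) ∧
      (∀ v, IsBinary v → (∀ n : ℕ, LexLe (Shf^[n] w) v) →
        LexLe (Prepend 1 1 (charWord θ)) v)) := by
  constructor
  · constructor
    · rintro ⟨θ, hs⟩
      exact ⟨charWord θ, binary_charWord hs.2.1.1 hs.2.1.2,
        fun n => sturmian_lex_bounds hs n⟩
    · rintro ⟨u, hu, hbd⟩
      exact backward hb hap hu hbd
  · intro θ hs
    exact ⟨fun u hu hbd => char_unique hs u hu hbd,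
      fun n => (sturmian_lex_bounds hs n).1,
      fun v hv hvb => inf_extremal hs v hv hvb,
      fun n => (sturmian_lex_bounds hs n).2,
      fun v hv hvb => sup_extremal hs v hv hvb⟩
end
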